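/- arXiv:1504.00086 — 6 statements merged into one kernel-verified Lean document; each statement's English description precedes it below -/
import Mathlib

section
/- Let H be a finite-dimensional real inner product space, B a set of unit-norm atoms, A the k-simple subset relative to B with integer k > 1, and let Φ : H → ℝ^m be a linear map having the (k, α, β)-generalized-weaken-RIP for distortions α, β > 0. Then for every ρ > 0, Φ satisfies the (ρ, α̃)-robust width property over the atom norm ‖·‖_B, i.e. for every x ∈ H with ‖x‖ > ρ‖x‖_B one has ‖Φx‖₂² ≥ (α² − (β² − α²)/(ρ²(k−1))) ‖x‖². -/
open scoped BigOperators

open scoped RealInnerProductSpace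

/-- The atom norm induced by a set of atoms `B`. -/
noncomputable def atomNorm {H : Type*} [AddCommGroup H] [Module ℝ H] (B : Set H) (x : H) : ℝ :=
  sInf { r : ℝ | ∃ (S : Finset H) (σ : H → ℝ), ↑S ⊆ B ∧ (∀ b ∈ S, 0 ≤ σ b) ∧
    x = ∑ b ∈ S, σ b • b ∧ r = ∑ b ∈ S, σ b }

/-- The `k`-simple subset relative to a set of atoms `B`. -/
def simpleSet {H : Type*} [AddCommGroup H] [Module ℝ H] (B : Set H) (k : ℕ) : Set H :=
  { x | ∃ (σ : Fin k → ℝ) (b : Fin k → H),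
      (∀ i, 0 ≤ σ i) ∧ (∀ i, b i ∈ B) ∧ x = ∑ i, σ i • b i }

/-- `B` spans `H` via finite nonnegative combinations. -/
def Spans {H : Type*} [AddCommGroup H] [Module ℝ H] (B : Set H) : Prop :=
  ∀ x : H, ∃ (S : Finset H) (σ : H → ℝ), ↑S ⊆ B ∧ (∀ b ∈ S, 0 ≤ σ b) ∧
    x = ∑ b ∈ S, σ b • b


lemma sum_pi_succ {ι : Type*} [Fintype ι] {M : Type*} [AddCommMonoid M] (n : ℕ)
    (g : (Fin (n+1) → ι) → M) :
    ∑ f : Fin (n+1) → ι, g f = ∑ j : ι, ∑ f : Fin n → ι, g (Fin.cons j f) := by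
  rw [← Equiv.sum_comp (Fin.consEquiv fun _ : Fin (n+1) => ι) g, Fintype.sum_prod_type]
  rfl

lemma sum_weights {ι : Type*} [Fintype ι] (p : ι → ℝ) (hp : ∑ j, p j = 1) :
    ∀ k : ℕ, ∑ f : Fin k → ι, ∏ t, p (f t) = 1 := by
  intro k
  induction k with
  | zero => simp
  | succ n ih =>
    rw [sum_pi_succ n (fun f => ∏ t, p (f t))]
    calc ∑ j : ι, ∑ f : Fin n → ι, ∏ t, p ((Fin.cons j f : Fin (n+1) → ι) t)
        = ∑ j : ι, p j * ∑ f : Fin n → ι, ∏ t, p (f t) := by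
          refine Finset.sum_congr rfl fun j _ => ?_
          rw [Finset.mul_sum]
          refine Finset.sum_congr rfl fun f _ => ?_
          rw [Fin.prod_univ_succ]
          simp [Fin.cons_zero, Fin.cons_succ]
      _ = 1 := by rw [ih]; simpa using hp

lemma sum_first_moment {ι : Type*} [Fintype ι] {E : Type*} [AddCommGroup E] [Module ℝ E]
    (p : ι → ℝ) (hp : ∑ j, p j = 1) (v : ι → E) :
    ∀ k : ℕ, ∑ f : Fin k → ι, (∏ t, p (f t)) • (∑ t, v (f t)) = (k : ℝ) • ∑ j, p j • v j := by
  intro k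
  induction k with
  | zero => simp
  | succ n ih =>
    rw [sum_pi_succ n (fun f => (∏ t, p (f t)) • (∑ t, v (f t)))]
    have step : ∀ j : ι,
        ∑ f : Fin n → ι, (∏ t, p ((Fin.cons j f : Fin (n+1) → ι) t)) •
            (∑ t, v ((Fin.cons j f : Fin (n+1) → ι) t))
        = p j • (v j + (n : ℝ) • ∑ i, p i • v i) := by
      intro j
      have e : ∀ f : Fin n → ι, (∏ t, p ((Fin.cons j f : Fin (n+1) → ι) t)) •
            (∑ t, v ((Fin.cons j f : Fin (n+1) → ι) t))
          = p j • ((∏ t, p (f t)) • v j + (∏ t, p (f t)) • (∑ t, v (f t))) := by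
        intro f
        rw [Fin.prod_univ_succ, Fin.sum_univ_succ]
        simp only [Fin.cons_zero, Fin.cons_succ, smul_add, mul_smul]
      rw [Finset.sum_congr rfl fun f _ => e f, ← Finset.smul_sum]
      congr 1
      rw [Finset.sum_add_distrib, ih, ← Finset.sum_smul, sum_weights p hp n, one_smul]
    rw [Finset.sum_congr rfl fun j _ => step j]
    simp only [smul_add]
    rw [Finset.sum_add_distrib, ← Finset.sum_smul, hp]
    push_cast
    rw [one_smul, add_smul, one_smul]
    module

lemma moment_sq {ι : Type*} [Fintype ι] {E : Type*} [NormedAddCommGroup E]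
    [InnerProductSpace ℝ E] (p : ι → ℝ) (hp : ∑ j, p j = 1) (v : ι → E) :
    ∀ k : ℕ, ∑ f : Fin k → ι, (∏ t, p (f t)) * ‖∑ t, v (f t)‖ ^ 2
      = (k : ℝ) * (∑ j, p j * ‖v j‖ ^ 2)
        + (k : ℝ) * ((k : ℝ) - 1) * ‖∑ j, p j • v j‖ ^ 2 := by
  intro k
  induction k with
  | zero => simp
  | succ n ih =>
    rw [sum_pi_succ n (fun f => (∏ t, p (f t)) * ‖∑ t, v (f t)‖ ^ 2)]
    have step : ∀ j : ι,
        ∑ f : Fin n → ι, (∏ t, p ((Fin.cons j f : Fin (n+1) → ι) t)) *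
            ‖∑ t, v ((Fin.cons j f : Fin (n+1) → ι) t)‖ ^ 2
        = p j * (‖v j‖ ^ 2 + 2 * ((n : ℝ) * ⟪v j, (∑ i, p i • v i)⟫)
            + ((n : ℝ) * (∑ i, p i * ‖v i‖ ^ 2)
               + (n : ℝ) * ((n : ℝ) - 1) * ‖∑ i, p i • v i‖ ^ 2)) := by
      intro j
      have e : ∀ f : Fin n → ι, (∏ t, p ((Fin.cons j f : Fin (n+1) → ι) t)) *
            ‖∑ t, v ((Fin.cons j f : Fin (n+1) → ι) t)‖ ^ 2
          = p j * ((∏ t, p (f t)) * ‖v j‖ ^ 2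
              + 2 * ⟪v j, (∏ t, p (f t)) • (∑ t, v (f t))⟫
              + (∏ t, p (f t)) * ‖∑ t, v (f t)‖ ^ 2) := by
        intro f
        rw [Fin.prod_univ_succ, Fin.sum_univ_succ]
        simp only [Fin.cons_zero, Fin.cons_succ]
        rw [norm_add_sq_real, real_inner_smul_right]
        ring
      rw [Finset.sum_congr rfl fun f _ => e f, ← Finset.mul_sum]
      congr 1
      rw [Finset.sum_add_distrib, Finset.sum_add_distrib, ih,
        ← Finset.sum_mul, sum_weights p hp n, one_mul,
        ← Finset.mul_sum, ← inner_sum, sum_first_moment p hp v n, real_inner_smul_right]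
    rw [Finset.sum_congr rfl fun j _ => step j]
    have e2 : ∀ j : ι, p j * (‖v j‖ ^ 2 + 2 * ((n : ℝ) * ⟪v j, (∑ i, p i • v i)⟫)
            + ((n : ℝ) * (∑ i, p i * ‖v i‖ ^ 2)
               + (n : ℝ) * ((n : ℝ) - 1) * ‖∑ i, p i • v i‖ ^ 2))
        = p j * ‖v j‖ ^ 2 + 2 * (n : ℝ) * ⟪p j • v j, (∑ i, p i • v i)⟫
          + p j * ((n : ℝ) * (∑ i, p i * ‖v i‖ ^ 2)
               + (n : ℝ) * ((n : ℝ) - 1) * ‖∑ i, p i • v i‖ ^ 2) := by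
      intro j
      rw [real_inner_smul_left]
      ring
    rw [Finset.sum_congr rfl fun j _ => e2 j, Finset.sum_add_distrib, Finset.sum_add_distrib,
      ← Finset.mul_sum, ← sum_inner, real_inner_self_eq_norm_sq, ← Finset.sum_mul, hp, one_mul]
    push_cast
    ring

set_option maxHeartbeats 1000000 in
/-- Generalized weaken RIP implies the robust width property over the atom norm. -/
theorem weakenRIP_implies_robustWidth
    {H : Type*} [NormedAddCommGroup H] [InnerProductSpace ℝ H] [FiniteDimensional ℝ H]
    {m : ℕ} (B : Set H)
    (hBsym : ∀ b ∈ B, -b ∈ B) (hBspan : Spans B) (hBunit : ∀ b ∈ B, ‖b‖ = 1)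
    (k : ℕ) (hk : 1 < k) (α β : ℝ) (hα : 0 < α) (hβ : 0 < β)
    (Φ : H →ₗ[ℝ] EuclideanSpace ℝ (Fin m))
    (hRIPa : ∀ x ∈ simpleSet B k, α * ‖x‖ ≤ ‖Φ x‖)
    (hRIPb : ∀ b ∈ B, ‖Φ b‖ ≤ β)
    (ρ : ℝ) (hρ : 0 < ρ) :
    ∀ x : H, ρ * atomNorm B x < ‖x‖ →
      (α ^ 2 - (β ^ 2 - α ^ 2) / (ρ ^ 2 * ((k : ℝ) - 1))) * ‖x‖ ^ 2 ≤ ‖Φ x‖ ^ 2 := by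
  intro x hx
  have hkpos : (0:ℝ) < (k : ℝ) := by positivity
  have hk1 : (1:ℝ) < (k : ℝ) := by exact_mod_cast hk
  have hc : (0:ℝ) < (k : ℝ) - 1 := by linarith
  -- the defining set of the atom norm
  set T : Set ℝ := { r : ℝ | ∃ (S : Finset H) (σ : H → ℝ), ↑S ⊆ B ∧ (∀ b ∈ S, 0 ≤ σ b) ∧
    x = ∑ b ∈ S, σ b • b ∧ r = ∑ b ∈ S, σ b } with hT
  have hTne : T.Nonempty := by
    obtain ⟨S, σ, h1, h2, h3⟩ := hBspan x
    exact ⟨∑ b ∈ S, σ b, S, σ, h1, h2, h3, rfl⟩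
  have hTnn : ∀ r ∈ T, 0 ≤ r := by
    rintro r ⟨S, σ, h1, h2, h3, rfl⟩
    exact Finset.sum_nonneg h2
  have hnn : 0 ≤ atomNorm B x := Real.sInf_nonneg hTnn
  have hxpos : 0 < ‖x‖ := lt_of_le_of_lt (by positivity) hx
  have hxne : x ≠ 0 := by simpa using hxpos.ne'
  have hinf : atomNorm B x < ‖x‖ / ρ := by
    rw [lt_div_iff₀ hρ]
    linarith [hx]
  obtain ⟨r, hrT, hrlt⟩ := exists_lt_of_csInf_lt hTne hinf
  obtain ⟨S, σ, hSB, hσnn, hxeq, rfl⟩ := hrT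
  set s : ℝ := ∑ b ∈ S, σ b with hs_def
  have hsnn : 0 ≤ s := Finset.sum_nonneg hσnn
  have hspos : 0 < s := by
    rcases hsnn.lt_or_eq with h | h
    · exact h
    · exfalso; apply hxne
      have hz : ∀ b ∈ S, σ b = 0 :=
        (Finset.sum_eq_zero_iff_of_nonneg hσnn).mp h.symm
      rw [hxeq]
      exact Finset.sum_eq_zero fun b hb => by rw [hz b hb, zero_smul]
  have hρs : ρ * s < ‖x‖ := by
    rw [lt_div_iff₀ hρ] at hrlt; linarith
  -- α ≤ β
  have hSne : S.Nonempty := by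
    rcases S.eq_empty_or_nonempty with h | h
    · exfalso; rw [h] at hs_def; simp at hs_def; exact hspos.ne' (by simpa using hs_def)
    · exact h
  haveI : NeZero k := ⟨by omega⟩
  have hαβ : α ≤ β := by
    obtain ⟨b₀, hb₀⟩ := hSne
    have hb₀B : b₀ ∈ B := hSB hb₀
    have hmem : b₀ ∈ simpleSet B k := by
      refine ⟨fun i => if i = 0 then 1 else 0, fun _ => b₀, ?_, fun _ => hb₀B, ?_⟩
      · intro i
        show (0:ℝ) ≤ if i = 0 then 1 else 0
        split <;> norm_num
      · simp [ite_smul]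
    have h1 := hRIPa b₀ hmem
    rw [hBunit b₀ hb₀B, mul_one] at h1
    exact h1.trans (hRIPb b₀ hb₀B)
  -- probability weights on S
  set p : S → ℝ := fun j => σ j / s with hp_def
  have hpnn : ∀ j : S, 0 ≤ p j := fun j => div_nonneg (hσnn j j.2) hsnn
  have hp1 : ∑ j : S, p j = 1 := by
    simp only [hp_def]
    rw [← Finset.sum_div, Finset.sum_coe_sort S σ, ← hs_def, div_self hspos.ne']
  have hmean : ∑ j : S, p j • (j : H) = s⁻¹ • x := by
    rw [hxeq, Finset.smul_sum]
    rw [← Finset.sum_coe_sort S (fun b => s⁻¹ • (σ b • b))]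
    refine Finset.sum_congr rfl fun j _ => ?_
    simp only [hp_def]
    rw [smul_smul, div_eq_inv_mul]
  have hmeanΦ : ∑ j : S, p j • Φ (j : H) = s⁻¹ • Φ x := by
    rw [← map_smul Φ, ← hmean, map_sum]
    simp [map_smul]
  -- pointwise RIP inequality on averaged atoms
  have hpt : ∀ f : Fin k → S, α * ‖∑ t, ((f t : H))‖ ≤ ‖∑ t, Φ ((f t : H))‖ := by
    intro f
    have hckpos : 0 < s / (k:ℝ) := by positivity
    have hmem : (s / (k:ℝ)) • (∑ t, ((f t : H))) ∈ simpleSet B k := by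
      refine ⟨fun _ => s / (k:ℝ), fun t => (f t : H), fun _ => hckpos.le,
        fun t => hSB (f t).2, ?_⟩
      rw [Finset.smul_sum]
    have h1 := hRIPa _ hmem
    rw [norm_smul, map_smul, norm_smul, Real.norm_eq_abs, abs_of_pos hckpos,
      map_sum, mul_left_comm] at h1
    exact le_of_mul_le_mul_left h1 hckpos
  have hpt2 : ∀ f : Fin k → S,
      α ^ 2 * ‖∑ t, ((f t : H))‖ ^ 2 ≤ ‖∑ t, Φ ((f t : H))‖ ^ 2 := by
    intro f
    have := pow_le_pow_left₀ (by positivity) (hpt f) 2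
    rwa [mul_pow] at this
  -- weighted sum of pointwise inequalities
  have hkey : α ^ 2 * (∑ f : Fin k → S, (∏ t, p (f t)) * ‖∑ t, ((f t : H))‖ ^ 2)
      ≤ ∑ f : Fin k → S, (∏ t, p (f t)) * ‖∑ t, Φ ((f t : H))‖ ^ 2 := by
    rw [Finset.mul_sum]
    refine Finset.sum_le_sum fun f _ => ?_
    have hW : 0 ≤ ∏ t, p (f t) := Finset.prod_nonneg fun t _ => hpnn _
    calc α ^ 2 * ((∏ t, p (f t)) * ‖∑ t, ((f t : H))‖ ^ 2)
        = (∏ t, p (f t)) * (α ^ 2 * ‖∑ t, ((f t : H))‖ ^ 2) := by ring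
      _ ≤ (∏ t, p (f t)) * ‖∑ t, Φ ((f t : H))‖ ^ 2 :=
          mul_le_mul_of_nonneg_left (hpt2 f) hW
  rw [moment_sq p hp1 (fun j : S => (j : H)) k,
    moment_sq p hp1 (fun j : S => Φ (j : H)) k] at hkey
  rw [hmean, hmeanΦ] at hkey
  have hQv : ∑ j : S, p j * ‖((j : S) : H)‖ ^ 2 = 1 := by
    rw [← hp1]
    exact Finset.sum_congr rfl fun j _ => by rw [hBunit _ (hSB j.2)]; ring
  have hQz : ∑ j : S, p j * ‖Φ ((j : S) : H)‖ ^ 2 ≤ β ^ 2 := by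
    calc ∑ j : S, p j * ‖Φ ((j : S) : H)‖ ^ 2 ≤ ∑ j : S, p j * β ^ 2 := by
          refine Finset.sum_le_sum fun j _ => mul_le_mul_of_nonneg_left ?_ (hpnn j)
          have h1 := hRIPb _ (hSB j.2)
          nlinarith [norm_nonneg (Φ ((j : S) : H))]
      _ = β ^ 2 := by rw [← Finset.sum_mul, hp1, one_mul]
  have hn1 : ‖s⁻¹ • x‖ ^ 2 = s⁻¹ ^ 2 * ‖x‖ ^ 2 := by
    rw [norm_smul, mul_pow, Real.norm_eq_abs, abs_of_pos (inv_pos.2 hspos)]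
  have hn2 : ‖s⁻¹ • Φ x‖ ^ 2 = s⁻¹ ^ 2 * ‖Φ x‖ ^ 2 := by
    rw [norm_smul, mul_pow, Real.norm_eq_abs, abs_of_pos (inv_pos.2 hspos)]
  rw [hQv, hn1, hn2] at hkey
  set QΦ : ℝ := ∑ j : S, p j * ‖Φ ((j : S) : H)‖ ^ 2 with hQdef
  have h3 := mul_le_mul_of_nonneg_right hkey (sq_nonneg s)
  have e1 : α ^ 2 * ((k:ℝ) * 1 + (k:ℝ) * ((k:ℝ) - 1) * (s⁻¹ ^ 2 * ‖x‖ ^ 2)) * s ^ 2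
      = (k:ℝ) * (α ^ 2 * (s ^ 2 + ((k:ℝ) - 1) * ‖x‖ ^ 2)) := by
    field_simp
  have e2 : ((k:ℝ) * QΦ + (k:ℝ) * ((k:ℝ) - 1) * (s⁻¹ ^ 2 * ‖Φ x‖ ^ 2)) * s ^ 2
      = (k:ℝ) * (QΦ * s ^ 2 + ((k:ℝ) - 1) * ‖Φ x‖ ^ 2) := by
    field_simp
  rw [e1, e2] at h3
  have hfinal : α ^ 2 * (s ^ 2 + ((k:ℝ) - 1) * ‖x‖ ^ 2)
      ≤ QΦ * s ^ 2 + ((k:ℝ) - 1) * ‖Φ x‖ ^ 2 := le_of_mul_le_mul_left h3 hkpos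
  have F3 : α ^ 2 * s ^ 2 + α ^ 2 * ((k:ℝ) - 1) * ‖x‖ ^ 2
      ≤ β ^ 2 * s ^ 2 + ((k:ℝ) - 1) * ‖Φ x‖ ^ 2 := by
    nlinarith [mul_le_mul_of_nonneg_right hQz (sq_nonneg s)]
  have hba : α ^ 2 ≤ β ^ 2 := by nlinarith
  have hs2 : ρ ^ 2 * s ^ 2 ≤ ‖x‖ ^ 2 := by nlinarith [mul_pos hρ hspos]
  have hd : 0 < ρ ^ 2 * ((k:ℝ) - 1) := by positivity
  apply le_of_mul_le_mul_right ?_ hd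
  have hexp : (α ^ 2 - (β ^ 2 - α ^ 2) / (ρ ^ 2 * ((k:ℝ) - 1))) * ‖x‖ ^ 2 * (ρ ^ 2 * ((k:ℝ) - 1))
      = α ^ 2 * ‖x‖ ^ 2 * (ρ ^ 2 * ((k:ℝ) - 1)) - (β ^ 2 - α ^ 2) * ‖x‖ ^ 2 := by
    field_simp
  rw [hexp]
  nlinarith [mul_le_mul_of_nonneg_right F3 (sq_nonneg ρ),
    mul_le_mul_of_nonneg_left hs2 (sub_nonneg.2 hba)]
end

section
/- Let Γ ∈ ℝ^{m×n} be a matrix having the (k, α, β)-weaken-RIP for an integer k with 1 < k ≤ n and distortions α, β > 0. Then for every ρ > 0 and every x ∈ ℝⁿ with ‖x‖₂ > ρ‖x‖₁, one has ‖Γx‖₂² ≥ (α² − (β² − α²)/(ρ²(k−1))) ‖x‖₂²; that is, Γ satisfies the (ρ, α̃)-robust width property over the ℓ1 norm with α̃² = α² − (β² − α²)/(ρ²(k−1)). -/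
open scoped BigOperators
open Finset

noncomputable def wrSgn (a : ℝ) : ℝ := if a < 0 then -1 else 1

lemma wrSgn_mul_abs (a : ℝ) : wrSgn a * |a| = a := by
  unfold wrSgn; split_ifs with h
  · rw [abs_of_neg h]; ring
  · rw [abs_of_nonneg (not_lt.mp h)]; ring

lemma wrSgn_mul_self (a : ℝ) : wrSgn a * wrSgn a = 1 := by
  unfold wrSgn; split_ifs <;> norm_num

lemma wr_sum_fun_prod {k n : ℕ} (g : Fin k → Fin n → ℝ) :
    ∑ v : Fin k → Fin n, ∏ t, g t (v t) = ∏ t, ∑ c, g t c := by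
  exact (Fintype.prod_sum g).symm

lemma wr_rip_sq {N Q α : ℝ} (hN : 0 ≤ N) (hQ : 0 ≤ Q) (hα : 0 ≤ α)
    (h : α * Real.sqrt N ≤ Real.sqrt Q) : α ^ 2 * N ≤ Q := by
  nlinarith [Real.sq_sqrt hN, Real.sq_sqrt hQ, Real.sqrt_nonneg N, Real.sqrt_nonneg Q,
    mul_self_le_mul_self (by positivity : (0:ℝ) ≤ α * Real.sqrt N) h]

lemma wr_marg_one {k n : ℕ} (p : Fin n → ℝ) (B : Fin n → Fin n → ℝ) (u : Fin k) :
    ∑ v : Fin k → Fin n, (∏ t, p (v t)) * B (v u) (v u)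
      = (∑ c, p c) ^ (k - 1) * ∑ i, p i * B i i := by
  classical
  set G : Fin n → Fin k → Fin n → ℝ :=
    fun i t c => if t = u then (if c = i then p c * B i i else 0) else p c with hG
  have hsplit : ∀ (i : Fin n) (v : Fin k → Fin n),
      ∏ t, G i t (v t)
        = (if v u = i then p (v u) * B i i else 0) * ∏ t ∈ Finset.univ.erase u, p (v t) := by
    intro i v
    rw [← Finset.mul_prod_erase Finset.univ (fun t => G i t (v t)) (Finset.mem_univ u)]
    congr 1
    · simp [hG]
    · exact Finset.prod_congr rfl fun t ht => by
        simp [hG, (Finset.mem_erase.mp ht).1]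
  have key : ∀ v : Fin k → Fin n,
      (∏ t, p (v t)) * B (v u) (v u) = ∑ i, ∏ t, G i t (v t) := by
    intro v
    simp only [hsplit]
    rw [← Finset.sum_mul, Finset.sum_ite_eq Finset.univ (v u) (fun i => p (v u) * B i i),
      if_pos (Finset.mem_univ _),
      ← Finset.mul_prod_erase Finset.univ (fun t => p (v t)) (Finset.mem_univ u)]
    ring
  calc ∑ v : Fin k → Fin n, (∏ t, p (v t)) * B (v u) (v u)
      = ∑ v : Fin k → Fin n, ∑ i, ∏ t, G i t (v t) := by
        exact Finset.sum_congr rfl fun v _ => key v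
    _ = ∑ i, ∑ v : Fin k → Fin n, ∏ t, G i t (v t) := Finset.sum_comm
    _ = ∑ i, ∏ t, ∑ c, G i t c := by
        exact Finset.sum_congr rfl fun i _ => wr_sum_fun_prod (G i)
    _ = (∑ c, p c) ^ (k - 1) * ∑ i, p i * B i i := by
        rw [Finset.mul_sum]
        refine Finset.sum_congr rfl fun i _ => ?_
        rw [← Finset.mul_prod_erase Finset.univ (fun t => ∑ c, G i t c) (Finset.mem_univ u)]
        have h1 : (∑ c, G i u c) = p i * B i i := by
          simp [hG, Finset.sum_ite_eq' Finset.univ i (fun c => p c * B i i)]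
        have h2 : ∏ t ∈ Finset.univ.erase u, (∑ c, G i t c)
            = (∑ c, p c) ^ (k - 1) := by
          rw [Finset.prod_congr rfl (fun t ht => ?_), Finset.prod_const,
            Finset.card_erase_of_mem (Finset.mem_univ u), Finset.card_univ, Fintype.card_fin]
          simp [hG, (Finset.mem_erase.mp ht).1]
        rw [h1, h2]; ring

lemma wr_marg_two {k n : ℕ} (p : Fin n → ℝ) (B : Fin n → Fin n → ℝ) (u u' : Fin k)
    (huu : u ≠ u') :
    ∑ v : Fin k → Fin n, (∏ t, p (v t)) * B (v u) (v u')
      = (∑ c, p c) ^ (k - 2) * ∑ i, ∑ j, p i * p j * B i j := by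
  classical
  have hmem : u' ∈ Finset.univ.erase u := Finset.mem_erase.mpr ⟨Ne.symm huu, Finset.mem_univ u'⟩
  set G : Fin n → Fin n → Fin k → Fin n → ℝ :=
    fun i j t c => if t = u then (if c = i then p c * B i j else 0)
      else if t = u' then (if c = j then p c else 0) else p c with hG
  have hprodsplit : ∀ f : Fin k → ℝ,
      ∏ t, f t = f u * (f u' * ∏ t ∈ (Finset.univ.erase u).erase u', f t) := by
    intro f
    rw [← Finset.mul_prod_erase Finset.univ f (Finset.mem_univ u),
      ← Finset.mul_prod_erase _ f (Finset.mem_erase.mpr ⟨Ne.symm huu, Finset.mem_univ u'⟩)]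
  have hsplit : ∀ (i j : Fin n) (v : Fin k → Fin n),
      ∏ t, G i j t (v t)
        = (if v u = i then p (v u) * B i j else 0) *
          ((if v u' = j then p (v u') else 0) *
            ∏ t ∈ (Finset.univ.erase u).erase u', p (v t)) := by
    intro i j v
    rw [hprodsplit (fun t => G i j t (v t))]
    congr 1
    · simp [hG]
    congr 1
    · simp [hG, huu.symm]
    · refine Finset.prod_congr rfl fun t ht => ?_
      have h1 := (Finset.mem_erase.mp ht).1
      have h2 := (Finset.mem_erase.mp (Finset.mem_erase.mp ht).2).1
      simp [hG, h1, h2]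
  have key : ∀ v : Fin k → Fin n,
      (∏ t, p (v t)) * B (v u) (v u') = ∑ i, ∑ j, ∏ t, G i j t (v t) := by
    intro v
    simp only [hsplit]
    have hinner : ∀ i, (∑ j, (if v u = i then p (v u) * B i j else 0) *
        ((if v u' = j then p (v u') else 0) *
          ∏ t ∈ (Finset.univ.erase u).erase u', p (v t)))
        = (if v u = i then p (v u) * B i (v u') else 0) *
          (p (v u') * ∏ t ∈ (Finset.univ.erase u).erase u', p (v t)) := by
      intro i
      rw [Finset.sum_eq_single (v u')]
      · simp
      · intro j _ hj; simp [Ne.symm hj]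
      · simp
    rw [Finset.sum_congr rfl fun i _ => hinner i, ← Finset.sum_mul,
      Finset.sum_ite_eq Finset.univ (v u) (fun i => p (v u) * B i (v u')),
      if_pos (Finset.mem_univ _), hprodsplit (fun t => p (v t))]
    ring
  calc ∑ v : Fin k → Fin n, (∏ t, p (v t)) * B (v u) (v u')
      = ∑ v : Fin k → Fin n, ∑ i, ∑ j, ∏ t, G i j t (v t) :=
        Finset.sum_congr rfl fun v _ => key v
    _ = ∑ i, ∑ v : Fin k → Fin n, ∑ j, ∏ t, G i j t (v t) := Finset.sum_comm
    _ = ∑ i, ∑ j, ∑ v : Fin k → Fin n, ∏ t, G i j t (v t) :=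
        Finset.sum_congr rfl fun i _ => Finset.sum_comm
    _ = ∑ i, ∑ j, ∏ t, ∑ c, G i j t c := by
        exact Finset.sum_congr rfl fun i _ => Finset.sum_congr rfl fun j _ =>
          wr_sum_fun_prod (G i j)
    _ = (∑ c, p c) ^ (k - 2) * ∑ i, ∑ j, p i * p j * B i j := by
        rw [Finset.mul_sum]
        refine Finset.sum_congr rfl fun i _ => ?_
        rw [Finset.mul_sum]
        refine Finset.sum_congr rfl fun j _ => ?_
        rw [hprodsplit (fun t => ∑ c, G i j t c)]
        have h1 : (∑ c, G i j u c) = p i * B i j := by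
          simp [hG, Finset.sum_ite_eq' Finset.univ i (fun c => p c * B i j)]
        have h2 : (∑ c, G i j u' c) = p j := by
          simp [hG, huu.symm, Finset.sum_ite_eq' Finset.univ j (fun c => p c)]
        have h3 : ∏ t ∈ (Finset.univ.erase u).erase u', (∑ c, G i j t c)
            = (∑ c, p c) ^ (k - 2) := by
          have hGt : ∀ t ∈ (Finset.univ.erase u).erase u',
              (∑ c, G i j t c) = ∑ c, p c := by
            intro t ht
            have ha := (Finset.mem_erase.mp ht).1
            have hb := (Finset.mem_erase.mp (Finset.mem_erase.mp ht).2).1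
            simp [hG, ha, hb]
          rw [Finset.prod_congr rfl hGt, Finset.prod_const,
            Finset.card_erase_of_mem hmem, Finset.card_erase_of_mem (Finset.mem_univ u),
            Finset.card_univ, Fintype.card_fin]
          congr 1
        rw [h1, h2, h3]; ring

noncomputable def wrZ {n k : ℕ} (x : Fin n → ℝ) (v : Fin k → Fin n) (i : Fin n) : ℝ :=
  ∑ u, if v u = i then wrSgn (x i) else 0

noncomputable def wrF {m n : ℕ} (Γ : Matrix (Fin m) (Fin n) ℝ) (α : ℝ) (x : Fin n → ℝ)
    (i j : Fin n) : ℝ :=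
  (∑ l, (Γ l i * wrSgn (x i)) * (Γ l j * wrSgn (x j))) - α ^ 2 * (if i = j then 1 else 0)

lemma wr_mulVec_z {m n k : ℕ} (Γ : Matrix (Fin m) (Fin n) ℝ) (x : Fin n → ℝ)
    (v : Fin k → Fin n) (l : Fin m) :
    (Γ.mulVec (wrZ x v)) l = ∑ u, Γ l (v u) * wrSgn (x (v u)) := by
  classical
  simp only [Matrix.mulVec, dotProduct, wrZ, Finset.mul_sum, mul_ite, mul_zero]
  rw [Finset.sum_comm]
  refine Finset.sum_congr rfl fun u _ => ?_
  rw [Finset.sum_ite_eq Finset.univ (v u) (fun i => Γ l i * wrSgn (x i)),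
    if_pos (Finset.mem_univ _)]

lemma wr_norm_z {n k : ℕ} (x : Fin n → ℝ) (v : Fin k → Fin n) :
    ∑ i, (wrZ x v i) ^ 2 = ∑ u : Fin k, ∑ u' : Fin k, (if v u = v u' then (1:ℝ) else 0) := by
  classical
  have h : ∀ i, (wrZ x v i) ^ 2
      = ∑ u : Fin k, ∑ u' : Fin k,
        (if v u = i then (if v u' = i then wrSgn (x i) * wrSgn (x i) else 0) else 0) := by
    intro i
    rw [sq, wrZ, Finset.sum_mul_sum]
    refine Finset.sum_congr rfl fun u _ => Finset.sum_congr rfl fun u' _ => ?_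
    split_ifs <;> ring
  rw [Finset.sum_congr rfl fun i _ => h i, Finset.sum_comm]
  refine Finset.sum_congr rfl fun u _ => ?_
  rw [Finset.sum_comm]
  refine Finset.sum_congr rfl fun u' _ => ?_
  rcases eq_or_ne (v u) (v u') with he | he
  · rw [if_pos he]
    have : ∀ i, (if v u = i then (if v u' = i then wrSgn (x i) * wrSgn (x i) else 0) else 0)
        = if v u = i then (1:ℝ) else 0 := by
      intro i
      rcases eq_or_ne (v u) i with h1 | h1
      · rw [if_pos h1, if_pos h1, if_pos (he ▸ h1), wrSgn_mul_self]
      · rw [if_neg h1, if_neg h1]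
    rw [Finset.sum_congr rfl fun i _ => this i,
      Finset.sum_ite_eq Finset.univ (v u) (fun _ => (1:ℝ)), if_pos (Finset.mem_univ _)]
  · rw [if_neg he]
    refine Finset.sum_eq_zero fun i _ => ?_
    rcases eq_or_ne (v u) i with h1 | h1
    · rw [if_pos h1, if_neg (h1 ▸ he ∘ Eq.symm ∘ (h1.symm ▸ ·))]
    · rw [if_neg h1]

lemma wr_quad_expand {m n k : ℕ} (Γ : Matrix (Fin m) (Fin n) ℝ) (α : ℝ) (x : Fin n → ℝ)
    (v : Fin k → Fin n) :
    (∑ j, (Γ.mulVec (wrZ x v)) j ^ 2) - α ^ 2 * ∑ i, (wrZ x v i) ^ 2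
      = ∑ u : Fin k, ∑ u' : Fin k, wrF Γ α x (v u) (v u') := by
  classical
  have h1 : (∑ j, (Γ.mulVec (wrZ x v)) j ^ 2)
      = ∑ u : Fin k, ∑ u' : Fin k,
          ∑ l, (Γ l (v u) * wrSgn (x (v u))) * (Γ l (v u') * wrSgn (x (v u'))) := by
    rw [Finset.sum_congr rfl fun l (_ : l ∈ Finset.univ) => by
      rw [wr_mulVec_z Γ x v l, sq, Finset.sum_mul_sum]]
    rw [Finset.sum_comm]
    exact Finset.sum_congr rfl fun u _ => Finset.sum_comm
  rw [h1, wr_norm_z, Finset.mul_sum, ← Finset.sum_sub_distrib]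
  refine Finset.sum_congr rfl fun u _ => ?_
  rw [Finset.mul_sum, ← Finset.sum_sub_distrib]
  exact Finset.sum_congr rfl fun u' _ => by rw [wrF]

lemma wr_sum_sum_ite {k : ℕ} (A B : ℝ) :
    (∑ u : Fin k, ∑ u' : Fin k, if u = u' then A else B)
      = (k : ℝ) * A + ((k : ℝ) ^ 2 - k) * B := by
  have h1 : ∀ u : Fin k, (∑ u' : Fin k, if u = u' then A else B)
      = A + ((k : ℝ) - 1) * B := by
    intro u
    have h2 : ∀ u' : Fin k, (if u = u' then A else B) = B + (if u = u' then A - B else 0) := by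
      intro u'; split_ifs <;> ring
    rw [Finset.sum_congr rfl fun u' _ => h2 u', Finset.sum_add_distrib,
      Finset.sum_const, Finset.sum_ite_eq Finset.univ u (fun _ => A - B),
      if_pos (Finset.mem_univ u), Finset.card_univ, Fintype.card_fin, nsmul_eq_mul]
    ring
  rw [Finset.sum_congr rfl fun u _ => h1 u, Finset.sum_const, Finset.card_univ,
    Fintype.card_fin, nsmul_eq_mul]
  ring

lemma wr_z_sparse {n k : ℕ} (x : Fin n → ℝ) (v : Fin k → Fin n) :
    {i | wrZ x v i ≠ 0}.ncard ≤ k := by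
  classical
  have hsub : {i | wrZ x v i ≠ 0} ⊆ ↑(Finset.image v Finset.univ) := by
    intro i hi
    simp only [Set.mem_setOf_eq, wrZ] at hi
    by_contra hni
    apply hi
    refine Finset.sum_eq_zero fun u _ => ?_
    rw [if_neg]
    intro he
    exact hni (Finset.mem_coe.mpr (Finset.mem_image.mpr ⟨u, Finset.mem_univ u, he⟩))
  calc {i | wrZ x v i ≠ 0}.ncard
      ≤ (↑(Finset.image v Finset.univ) : Set (Fin n)).ncard :=
        Set.ncard_le_ncard hsub (Finset.finite_toSet _)
    _ = (Finset.image v Finset.univ).card := Set.ncard_coe_finset _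
    _ ≤ Finset.univ.card := Finset.card_image_le
    _ = k := by rw [Finset.card_univ, Fintype.card_fin]

/-- Weaken-RIP implies the robust width property over the ℓ1 norm. -/
theorem weakenRIP_implies_robustWidth_l1
    {m n : ℕ} (Γ : Matrix (Fin m) (Fin n) ℝ)
    (k : ℕ) (hk1 : 1 < k) (hkn : k ≤ n)
    (α β : ℝ) (hα : 0 < α) (hβ : 0 < β)
    (hRIPa : ∀ x : Fin n → ℝ, {i | x i ≠ 0}.ncard ≤ k →
      α * Real.sqrt (∑ i, x i ^ 2) ≤ Real.sqrt (∑ j, (Γ.mulVec x) j ^ 2))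
    (hRIPb : ∀ i : Fin n, Real.sqrt (∑ j, (Γ.mulVec (Pi.single i 1)) j ^ 2) ≤ β)
    (ρ : ℝ) (hρ : 0 < ρ) :
    ∀ x : Fin n → ℝ, ρ * (∑ i, |x i|) < Real.sqrt (∑ i, x i ^ 2) →
      (α ^ 2 - (β ^ 2 - α ^ 2) / (ρ ^ 2 * ((k : ℝ) - 1))) * (∑ i, x i ^ 2)
        ≤ ∑ j, (Γ.mulVec x) j ^ 2 := by
  classical
  intro x hx
  set L : ℝ := ∑ i, |x i| with hLdef
  set X : ℝ := ∑ i, x i ^ 2 with hXdef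
  set Q : ℝ := ∑ j, (Γ.mulVec x) j ^ 2 with hQdef
  set Dg : ℝ := ∑ i, |x i| * wrF Γ α x i i with hDgdef
  set T : ℝ := ∑ i, ∑ j, |x i| * |x j| * wrF Γ α x i j with hTdef
  have hX0 : 0 ≤ X := Finset.sum_nonneg fun i _ => sq_nonneg _
  have hL0 : 0 ≤ L := Finset.sum_nonneg fun i _ => abs_nonneg _
  -- L is positive
  have hLpos : 0 < L := by
    rcases lt_or_eq_of_le hL0 with h | h
    · exact h
    · exfalso
      have hx0 : ∀ i ∈ Finset.univ, |x i| = 0 := by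
        intro i hi
        exact (Finset.sum_eq_zero_iff_of_nonneg fun i _ => abs_nonneg (x i)).mp h.symm i hi
      have hX00 : X = 0 := Finset.sum_eq_zero fun i hi => by
        rw [abs_eq_zero.mp (hx0 i hi)]; ring
      rw [hX00, Real.sqrt_zero] at hx
      nlinarith
  -- column bounds
  have hcol : ∀ i, (∑ l, Γ l i * Γ l i) ≤ β ^ 2 := by
    intro i
    have h1 : (∑ j, (Γ.mulVec (Pi.single i 1)) j ^ 2) = ∑ l, Γ l i * Γ l i := by
      refine Finset.sum_congr rfl fun l _ => ?_
      rw [Matrix.mulVec_single]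
      simp [sq]
    have h2 := hRIPb i
    have h3 : 0 ≤ ∑ j, (Γ.mulVec (Pi.single i 1 : Fin n → ℝ)) j ^ 2 :=
      Finset.sum_nonneg fun j _ => sq_nonneg _
    nlinarith [Real.sq_sqrt h3, Real.sqrt_nonneg (∑ j, (Γ.mulVec (Pi.single i 1 : Fin n → ℝ)) j ^ 2)]
  -- α ≤ β
  have hn0 : 0 < n := lt_of_lt_of_le (Nat.lt_of_lt_of_le Nat.zero_lt_one hk1.le) hkn
  have hαβ : α ≤ β := by
    set i0 : Fin n := ⟨0, hn0⟩
    have hsup : {i | (Pi.single i0 1 : Fin n → ℝ) i ≠ 0}.ncard ≤ k := by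
      have he : {i | (Pi.single i0 1 : Fin n → ℝ) i ≠ 0} = {i0} := by
        ext i
        simp [Pi.single_apply]
      rw [he, Set.ncard_singleton]
      omega
    have hone : ∑ i, (Pi.single i0 1 : Fin n → ℝ) i ^ 2 = 1 := by
      have h1 : ∀ i, (Pi.single i0 1 : Fin n → ℝ) i ^ 2 = if i = i0 then 1 else 0 := by
        intro i
        rcases eq_or_ne i i0 with h | h <;> simp [Pi.single_apply, h]
      rw [Finset.sum_congr rfl fun i _ => h1 i,
        Finset.sum_ite_eq' Finset.univ i0 (fun _ => (1:ℝ)), if_pos (Finset.mem_univ _)]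
    have h2 := hRIPa (Pi.single i0 1) hsup
    rw [hone, Real.sqrt_one, mul_one] at h2
    exact le_trans h2 (hRIPb i0)
  have hba : 0 ≤ β ^ 2 - α ^ 2 := by nlinarith
  -- F diagonal bound
  have hFd : ∀ i, wrF Γ α x i i ≤ β ^ 2 - α ^ 2 := by
    intro i
    have hdiag : ∀ l, (Γ l i * wrSgn (x i)) * (Γ l i * wrSgn (x i)) = Γ l i * Γ l i := by
      intro l
      calc (Γ l i * wrSgn (x i)) * (Γ l i * wrSgn (x i))
          = (Γ l i * Γ l i) * (wrSgn (x i) * wrSgn (x i)) := by ring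
        _ = Γ l i * Γ l i := by rw [wrSgn_mul_self, mul_one]
    rw [wrF, if_pos rfl, mul_one, Finset.sum_congr rfl fun l _ => hdiag l]
    have := hcol i
    linarith
  -- Dg bound
  have hDg : Dg ≤ (β ^ 2 - α ^ 2) * L := by
    rw [hDgdef, hLdef, Finset.mul_sum]
    exact Finset.sum_le_sum fun i _ => by
      rw [mul_comm ((β:ℝ)^2 - α^2) (|x i|)]
      exact mul_le_mul_of_nonneg_left (hFd i) (abs_nonneg _)
  -- T identity
  have hT : T = Q - α ^ 2 * X := by
    have hterm : ∀ i j, |x i| * |x j| * wrF Γ α x i j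
        = (∑ l, (Γ l i * x i) * (Γ l j * x j))
          - (if i = j then |x i| * |x j| * α ^ 2 else 0) := by
      intro i j
      rw [wrF, mul_sub, Finset.mul_sum]
      congr 1
      · refine Finset.sum_congr rfl fun l _ => ?_
        calc |x i| * |x j| * ((Γ l i * wrSgn (x i)) * (Γ l j * wrSgn (x j)))
            = (Γ l i * (wrSgn (x i) * |x i|)) * (Γ l j * (wrSgn (x j) * |x j|)) := by ring
          _ = (Γ l i * x i) * (Γ l j * x j) := by rw [wrSgn_mul_abs, wrSgn_mul_abs]
      · split_ifs <;> ring
    rw [hTdef, Finset.sum_congr rfl fun i _ => Finset.sum_congr rfl fun j _ => hterm i j]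
    have hsplit : ∀ i : Fin n, (∑ j, ((∑ l, (Γ l i * x i) * (Γ l j * x j))
          - (if i = j then |x i| * |x j| * α ^ 2 else 0)))
        = (∑ j, ∑ l, (Γ l i * x i) * (Γ l j * x j)) - |x i| * |x i| * α ^ 2 := by
      intro i
      rw [Finset.sum_sub_distrib, Finset.sum_ite_eq Finset.univ i
        (fun j => |x i| * |x j| * α ^ 2), if_pos (Finset.mem_univ _)]
    rw [Finset.sum_congr rfl fun i _ => hsplit i, Finset.sum_sub_distrib]
    congr 1
    · -- main quadratic term equals Q
      have h1 : ∀ i : Fin n, (∑ j, ∑ l, (Γ l i * x i) * (Γ l j * x j))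
          = ∑ l, ∑ j, (Γ l i * x i) * (Γ l j * x j) := fun i => Finset.sum_comm
      rw [Finset.sum_congr rfl fun i _ => h1 i, Finset.sum_comm, hQdef]
      refine Finset.sum_congr rfl fun l _ => ?_
      have h2 : (Γ.mulVec x) l = ∑ i, Γ l i * x i := by
        simp [Matrix.mulVec, dotProduct]
      rw [h2, sq, Finset.sum_mul_sum]
    · rw [hXdef, Finset.mul_sum]
      refine Finset.sum_congr rfl fun i _ => ?_
      rw [abs_mul_abs_self]
      ring
  -- master inequality
  have master : 0 ≤ ∑ v : Fin k → Fin n,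
      (∏ t, |x (v t)|) * (∑ u : Fin k, ∑ u' : Fin k, wrF Γ α x (v u) (v u')) := by
    refine Finset.sum_nonneg fun v _ => mul_nonneg (Finset.prod_nonneg fun t _ => abs_nonneg _) ?_
    rw [← wr_quad_expand Γ α x v]
    have hN0 : 0 ≤ ∑ i, (wrZ x v i) ^ 2 := Finset.sum_nonneg fun i _ => sq_nonneg _
    have hQ0 : 0 ≤ ∑ j, (Γ.mulVec (wrZ x v)) j ^ 2 := Finset.sum_nonneg fun j _ => sq_nonneg _
    have := wr_rip_sq hN0 hQ0 hα.le (hRIPa (wrZ x v) (wr_z_sparse x v))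
    linarith
  have hswap : (∑ v : Fin k → Fin n,
        (∏ t, |x (v t)|) * (∑ u : Fin k, ∑ u' : Fin k, wrF Γ α x (v u) (v u')))
      = ∑ u : Fin k, ∑ u' : Fin k, ∑ v : Fin k → Fin n,
          (∏ t, |x (v t)|) * wrF Γ α x (v u) (v u') := by
    simp only [Finset.mul_sum]
    rw [Finset.sum_comm]
    exact Finset.sum_congr rfl fun u _ => Finset.sum_comm
  have heval : ∀ u u' : Fin k, (∑ v : Fin k → Fin n,
        (∏ t, |x (v t)|) * wrF Γ α x (v u) (v u'))
      = if u = u' then L ^ (k-1) * Dg else L ^ (k-2) * T := by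
    intro u u'
    by_cases h : u = u'
    · subst h
      rw [if_pos rfl]
      exact wr_marg_one (fun i => |x i|) (wrF Γ α x) u
    · rw [if_neg h]
      exact wr_marg_two (fun i => |x i|) (wrF Γ α x) u u' h
  rw [hswap, Finset.sum_congr rfl fun u _ => Finset.sum_congr rfl fun u' _ => heval u u',
    wr_sum_sum_ite] at master
  -- final algebra
  have hk2R : (2:ℝ) ≤ (k:ℝ) := by exact_mod_cast hk1
  have hLpow : L ^ (k-1) = L ^ (k-2) * L := by
    rw [← pow_succ]
    congr 1
    omega
  have h5 : 0 ≤ L * Dg + ((k:ℝ) - 1) * T := by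
    by_contra h
    push_neg at h
    have heq : (k:ℝ) * (L ^ (k-1) * Dg) + ((k:ℝ) ^ 2 - k) * (L ^ (k-2) * T)
        = ((k:ℝ) * L ^ (k-2)) * (L * Dg + ((k:ℝ) - 1) * T) := by
      rw [hLpow]; ring
    rw [heq] at master
    have hc : (0:ℝ) < (k:ℝ) * L ^ (k-2) := by
      have : (0:ℝ) < (k:ℝ) := by linarith
      positivity
    exact absurd master (not_le.mpr (mul_neg_of_pos_of_neg hc h))
  have h6 : -((β ^ 2 - α ^ 2) * (L * L)) ≤ ((k:ℝ) - 1) * T := by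
    have := mul_le_mul_of_nonneg_left hDg hL0
    linarith
  have hρL : ρ ^ 2 * L ^ 2 ≤ X := by
    have h := mul_self_lt_mul_self (by positivity) hx
    rw [Real.mul_self_sqrt hX0] at h
    nlinarith
  have hd : (0:ℝ) < ρ ^ 2 * ((k:ℝ) - 1) := by
    have h1 : (0:ℝ) < ρ ^ 2 := by positivity
    have h2 : (0:ℝ) < (k:ℝ) - 1 := by linarith only [hk2R]
    exact mul_pos h1 h2
  have hdc : (β ^ 2 - α ^ 2) / (ρ ^ 2 * ((k:ℝ) - 1)) * (ρ ^ 2 * ((k:ℝ) - 1)) = β ^ 2 - α ^ 2 :=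
    div_mul_cancel₀ _ (ne_of_gt hd)
  have h9 : ρ ^ 2 * (-((β ^ 2 - α ^ 2) * (L * L))) ≤ ρ ^ 2 * (((k:ℝ) - 1) * T) :=
    mul_le_mul_of_nonneg_left h6 (by positivity)
  have h10 : (β ^ 2 - α ^ 2) * (ρ ^ 2 * L ^ 2) ≤ (β ^ 2 - α ^ 2) * X :=
    mul_le_mul_of_nonneg_left hρL hba
  have h12 : 0 ≤ (ρ ^ 2 * ((k:ℝ) - 1))
      * (Q - α ^ 2 * X + (β ^ 2 - α ^ 2) / (ρ ^ 2 * ((k:ℝ) - 1)) * X) := by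
    have e : (ρ ^ 2 * ((k:ℝ) - 1))
        * (Q - α ^ 2 * X + (β ^ 2 - α ^ 2) / (ρ ^ 2 * ((k:ℝ) - 1)) * X)
        = ρ ^ 2 * (((k:ℝ) - 1) * T)
          + ((β ^ 2 - α ^ 2) / (ρ ^ 2 * ((k:ℝ) - 1)) * (ρ ^ 2 * ((k:ℝ) - 1))) * X := by
      rw [hT]; ring
    rw [e, hdc]
    nlinarith only [h9, h10]
  have h11 : 0 ≤ Q - α ^ 2 * X + (β ^ 2 - α ^ 2) / (ρ ^ 2 * ((k:ℝ) - 1)) * X := by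
    by_contra h
    push_neg at h
    exact absurd h12 (not_le.mpr (mul_neg_of_pos_of_neg hd h))
  nlinarith only [h11, hX0]
end

section
/- Let H be a finite-dimensional real inner product space, B ⊆ H a set of atoms, k > 1 an integer, A the k-simple subset relative to B, and Φ : H → ℝ^m a linear map satisfying ‖Φu‖₂ ≥ α‖u‖ for every u ∈ A, where α > 0. Let x ∈ H be nonzero and let x = ∑_{b∈S} σ_b b be any representation with S ⊆ B finite and σ_b ≥ 0, and set γ = ∑_{b∈S} σ_b. Then ‖Φx‖₂² ≥ α²‖x‖² − (γ/(k−1)) ( ∑_{b∈S} σ_b ‖Φb‖₂² − α² ∑_{b∈S} σ_b ‖b‖² ). -/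
set_option maxHeartbeats 1000000


open scoped BigOperators

open Finset
open scoped InnerProductSpace

private lemma marg_single {H : Type*} {k : ℕ} (S : Finset H) (μ f : H → ℝ)
    (hμ1 : ∑ b ∈ S, μ b = 1) (i : Fin k) :
    ∑ t ∈ Fintype.piFinset (fun _ : Fin k => S), (∏ l, μ (t l)) * f (t i)
      = ∑ b ∈ S, μ b * f b := by
  have h1 : ∀ t : Fin k → H, (∏ l, μ (t l)) * f (t i)
      = ∏ l, ((if l = i then f (t l) else 1) * μ (t l)) := by
    intro t
    rw [Finset.prod_mul_distrib, Finset.prod_ite_eq' Finset.univ i (fun l => f (t l))]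
    simp [mul_comm]
  simp_rw [h1]
  refine (Finset.sum_prod_piFinset (ι := Fin k) S
    (fun l b => (if l = i then f b else 1) * μ b)).trans ?_
  have h2 : ∀ l : Fin k, (∑ b ∈ S, (if l = i then f b else 1) * μ b)
      = if l = i then ∑ b ∈ S, μ b * f b else 1 := by
    intro l
    split_ifs with h
    · simp [mul_comm]
    · simpa using hμ1
  simp_rw [h2]
  rw [Finset.prod_ite_eq' Finset.univ i (fun _ => ∑ b ∈ S, μ b * f b)]
  simp

private lemma marg_pair {H : Type*} {k : ℕ} (S : Finset H) (μ f g : H → ℝ)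
    (hμ1 : ∑ b ∈ S, μ b = 1) (i j : Fin k) (hij : i ≠ j) :
    ∑ t ∈ Fintype.piFinset (fun _ : Fin k => S), (∏ l, μ (t l)) * (f (t i) * g (t j))
      = (∑ b ∈ S, μ b * f b) * (∑ b ∈ S, μ b * g b) := by
  have h1 : ∀ t : Fin k → H, (∏ l, μ (t l)) * (f (t i) * g (t j))
      = ∏ l, ((if l = i then f (t l) else 1) * ((if l = j then g (t l) else 1) * μ (t l))) := by
    intro t
    simp_rw [Finset.prod_mul_distrib]
    rw [Finset.prod_ite_eq' Finset.univ i (fun l => f (t l)),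
      Finset.prod_ite_eq' Finset.univ j (fun l => g (t l))]
    simp; ring
  simp_rw [h1]
  refine (Finset.sum_prod_piFinset (ι := Fin k) S
    (fun l b => (if l = i then f b else 1) * ((if l = j then g b else 1) * μ b))).trans ?_
  have h2 : ∀ l : Fin k, (∑ b ∈ S, (if l = i then f b else 1) * ((if l = j then g b else 1) * μ b))
      = (if l = i then ∑ b ∈ S, μ b * f b else 1) * (if l = j then ∑ b ∈ S, μ b * g b else 1) := by
    intro l
    rcases eq_or_ne l i with rfl | hi
    · simp only [if_pos rfl, if_neg hij, one_mul, mul_one]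
      exact Finset.sum_congr rfl fun b _ => mul_comm _ _
    · rcases eq_or_ne l j with rfl | hj
      · simp only [if_neg hi, if_pos rfl, one_mul]
        exact Finset.sum_congr rfl fun b _ => mul_comm _ _
      · simp only [if_neg hi, if_neg hj, one_mul, mul_one]
        simpa using hμ1
  simp_rw [h2]
  rw [Finset.prod_mul_distrib,
    Finset.prod_ite_eq' Finset.univ i (fun _ => ∑ b ∈ S, μ b * f b),
    Finset.prod_ite_eq' Finset.univ j (fun _ => ∑ b ∈ S, μ b * g b)]
  simp

private lemma expect_sq {H F : Type*} [NormedAddCommGroup F] [InnerProductSpace ℝ F]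
    [FiniteDimensional ℝ F] {k : ℕ} (S : Finset H) (μ : H → ℝ)
    (hμ1 : ∑ b ∈ S, μ b = 1) (g : H → F) :
    ∑ t ∈ Fintype.piFinset (fun _ : Fin k => S), (∏ l, μ (t l)) * ‖∑ i, g (t i)‖ ^ 2
      = (k : ℝ) * (∑ b ∈ S, μ b * ‖g b‖ ^ 2)
        + ((k : ℝ) ^ 2 - k) * ‖∑ b ∈ S, μ b • g b‖ ^ 2 := by
  classical
  set m : F := ∑ b ∈ S, μ b • g b with hm
  set e := stdOrthonormalBasis ℝ F
  have hinner : ∀ c, ∑ b ∈ S, μ b * ⟪g b, e c⟫_ℝ = ⟪m, e c⟫_ℝ := by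
    intro c
    rw [hm, sum_inner]
    exact Finset.sum_congr rfl fun b _ => (real_inner_smul_left _ _ _).symm
  have hinner' : ∀ c, ∑ b ∈ S, μ b * ⟪e c, g b⟫_ℝ = ⟪e c, m⟫_ℝ := by
    intro c
    rw [hm, inner_sum]
    exact Finset.sum_congr rfl fun b _ => (real_inner_smul_right _ _ _).symm
  have key : ∀ t : Fin k → H,
      (∏ l, μ (t l)) * ‖∑ i, g (t i)‖ ^ 2
        = ∑ i : Fin k, ∑ j : Fin k, (∏ l, μ (t l)) * ⟪g (t i), g (t j)⟫_ℝ := by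
    intro t
    rw [← real_inner_self_eq_norm_sq, sum_inner]
    simp_rw [inner_sum, Finset.mul_sum]
  simp_rw [key]
  rw [Finset.sum_comm]
  have step : ∀ i : Fin k,
      (∑ t ∈ Fintype.piFinset (fun _ : Fin k => S), ∑ j : Fin k,
        (∏ l, μ (t l)) * ⟪g (t i), g (t j)⟫_ℝ)
        = ∑ j : Fin k, ∑ t ∈ Fintype.piFinset (fun _ : Fin k => S),
            (∏ l, μ (t l)) * ⟪g (t i), g (t j)⟫_ℝ := fun i => Finset.sum_comm
  simp_rw [step]
  have hij : ∀ i j : Fin k,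
      (∑ t ∈ Fintype.piFinset (fun _ : Fin k => S), (∏ l, μ (t l)) * ⟪g (t i), g (t j)⟫_ℝ)
        = if i = j then ∑ b ∈ S, μ b * ‖g b‖ ^ 2 else ‖m‖ ^ 2 := by
    intro i j
    split_ifs with h
    · subst h
      have : ∀ t : Fin k → H, (∏ l, μ (t l)) * ⟪g (t i), g (t i)⟫_ℝ
          = (∏ l, μ (t l)) * ‖g (t i)‖ ^ 2 := by
        intro t; rw [real_inner_self_eq_norm_sq]
      simp_rw [this]
      exact marg_single S μ (fun b => ‖g b‖ ^ 2) hμ1 i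
    · have expand : ∀ t : Fin k → H, (∏ l, μ (t l)) * ⟪g (t i), g (t j)⟫_ℝ
          = ∑ c, (∏ l, μ (t l)) * (⟪g (t i), e c⟫_ℝ * ⟪e c, g (t j)⟫_ℝ) := by
        intro t
        rw [← Finset.mul_sum, e.sum_inner_mul_inner]
      simp_rw [expand]
      rw [Finset.sum_comm]
      have : ∀ c, (∑ t ∈ Fintype.piFinset (fun _ : Fin k => S),
          (∏ l, μ (t l)) * (⟪g (t i), e c⟫_ℝ * ⟪e c, g (t j)⟫_ℝ))
            = ⟪m, e c⟫_ℝ * ⟪e c, m⟫_ℝ := by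
        intro c
        rw [marg_pair S μ (fun b => ⟪g b, e c⟫_ℝ) (fun b => ⟪e c, g b⟫_ℝ) hμ1 i j h,
          hinner, hinner']
      simp_rw [this]
      rw [e.sum_inner_mul_inner, real_inner_self_eq_norm_sq]
  simp_rw [hij]
  have hrow : ∀ i : Fin k, (∑ j : Fin k,
      if i = j then ∑ b ∈ S, μ b * ‖g b‖ ^ 2 else ‖m‖ ^ 2)
        = (∑ b ∈ S, μ b * ‖g b‖ ^ 2) + ((k : ℝ) - 1) * ‖m‖ ^ 2 := by
    intro i
    have : ∀ j : Fin k, (if i = j then ∑ b ∈ S, μ b * ‖g b‖ ^ 2 else ‖m‖ ^ 2)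
        = (if i = j then (∑ b ∈ S, μ b * ‖g b‖ ^ 2) - ‖m‖ ^ 2 else 0) + ‖m‖ ^ 2 := by
      intro j; split_ifs <;> ring
    simp_rw [this]
    rw [Finset.sum_add_distrib, Finset.sum_ite_eq]
    simp [Finset.card_univ]
    ring
  simp_rw [hrow]
  rw [Finset.sum_const]
  simp [Finset.card_univ]
  ring

/-- The key Maurey-type inequality (Step 1 of the proof of the main theorem). -/
theorem maurey_inequality
    {H : Type*} [NormedAddCommGroup H] [InnerProductSpace ℝ H] [FiniteDimensional ℝ H]
    {m : ℕ} (B : Set H) (k : ℕ) (hk : 1 < k) (α : ℝ) (hα : 0 < α)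
    (Φ : H →ₗ[ℝ] EuclideanSpace ℝ (Fin m))
    (hRIPa : ∀ u ∈ simpleSet B k, α * ‖u‖ ≤ ‖Φ u‖)
    (x : H) (hx : x ≠ 0)
    (S : Finset H) (σ : H → ℝ) (hSB : ↑S ⊆ B) (hσ : ∀ b ∈ S, 0 ≤ σ b)
    (hrep : x = ∑ b ∈ S, σ b • b) :
    α ^ 2 * ‖x‖ ^ 2 - ((∑ b ∈ S, σ b) / ((k : ℝ) - 1)) *
        ((∑ b ∈ S, σ b * ‖Φ b‖ ^ 2) - α ^ 2 * ∑ b ∈ S, σ b * ‖b‖ ^ 2)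
      ≤ ‖Φ x‖ ^ 2 := by
  classical
  set γ : ℝ := ∑ b ∈ S, σ b with hγdef
  have hγ0 : 0 ≤ γ := Finset.sum_nonneg hσ
  have hγ : 0 < γ := by
    rcases hγ0.lt_or_eq with h | h
    · exact h
    · exfalso
      apply hx
      rw [hrep]
      apply Finset.sum_eq_zero
      intro b hb
      have := (Finset.sum_eq_zero_iff_of_nonneg hσ).mp h.symm b hb
      simp [this]
  have hk0 : (0 : ℝ) < k := by positivity
  have hk1 : (1 : ℝ) < k := by exact_mod_cast hk
  set μ : H → ℝ := fun b => σ b / γ with hμdef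
  have hμ1 : ∑ b ∈ S, μ b = 1 := by
    rw [hμdef]
    rw [← Finset.sum_div]
    field_simp
    exact hγdef.symm
  set c : ℝ := γ / k with hcdef
  have hc : 0 < c := by positivity
  -- The averaged vectors lie in the simple set
  set T := Fintype.piFinset (fun _ : Fin k => S) with hT
  have hmem : ∀ t ∈ T, (∑ i : Fin k, c • (t i : H)) ∈ simpleSet B k := by
    intro t ht
    refine ⟨fun _ => c, t, fun _ => hc.le, ?_, rfl⟩
    intro i
    exact hSB (Fintype.mem_piFinset.mp ht i)
  -- pointwise squared inequality
  have hpt : ∀ t ∈ T, α ^ 2 * ‖∑ i : Fin k, c • (t i : H)‖ ^ 2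
      ≤ ‖∑ i : Fin k, c • Φ (t i)‖ ^ 2 := by
    intro t ht
    have h1 := hRIPa _ (hmem t ht)
    have h2 : Φ (∑ i : Fin k, c • (t i : H)) = ∑ i : Fin k, c • Φ (t i) := by
      rw [map_sum]; simp
    rw [h2] at h1
    have h3 : (α * ‖∑ i : Fin k, c • (t i : H)‖) ^ 2 ≤ ‖∑ i : Fin k, c • Φ (t i)‖ ^ 2 := by
      apply pow_le_pow_left₀ (by positivity) h1
    calc α ^ 2 * ‖∑ i : Fin k, c • (t i : H)‖ ^ 2
        = (α * ‖∑ i : Fin k, c • (t i : H)‖) ^ 2 := by ring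
      _ ≤ _ := h3
  have hw : ∀ t ∈ T, 0 ≤ ∏ l, μ (t l) := by
    intro t ht
    apply Finset.prod_nonneg
    intro l _
    have := Fintype.mem_piFinset.mp ht l
    exact div_nonneg (hσ _ this) hγ0
  have hsum : ∑ t ∈ T, (∏ l, μ (t l)) * (α ^ 2 * ‖∑ i : Fin k, c • (t i : H)‖ ^ 2)
      ≤ ∑ t ∈ T, (∏ l, μ (t l)) * ‖∑ i : Fin k, c • Φ (t i)‖ ^ 2 := by
    apply Finset.sum_le_sum
    intro t ht
    exact mul_le_mul_of_nonneg_left (hpt t ht) (hw t ht)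
  -- compute both sides via expect_sq
  have eL : ∑ t ∈ T, (∏ l, μ (t l)) * ‖∑ i : Fin k, c • (t i : H)‖ ^ 2
      = (k : ℝ) * (∑ b ∈ S, μ b * ‖c • b‖ ^ 2)
        + ((k : ℝ) ^ 2 - k) * ‖∑ b ∈ S, μ b • (c • b)‖ ^ 2 :=
    expect_sq S μ hμ1 (fun b => c • b)
  have eR : ∑ t ∈ T, (∏ l, μ (t l)) * ‖∑ i : Fin k, c • Φ (t i)‖ ^ 2
      = (k : ℝ) * (∑ b ∈ S, μ b * ‖c • Φ b‖ ^ 2)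
        + ((k : ℝ) ^ 2 - k) * ‖∑ b ∈ S, μ b • (c • Φ b)‖ ^ 2 :=
    expect_sq S μ hμ1 (fun b => c • Φ b)
  -- simplify the moments
  have hm1 : ∑ b ∈ S, μ b • (c • b) = (c / γ) • x := by
    rw [hrep, Finset.smul_sum]
    apply Finset.sum_congr rfl
    intro b _
    rw [smul_smul, smul_smul]
    congr 1
    rw [hμdef]
    field_simp
  have hm2 : ∑ b ∈ S, μ b • (c • Φ b) = (c / γ) • Φ x := by
    rw [hrep, map_sum, Finset.smul_sum]
    apply Finset.sum_congr rfl
    intro b _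
    rw [map_smul, smul_smul, smul_smul]
    congr 1
    rw [hμdef]
    field_simp
  have hnx : ‖(c / γ) • x‖ ^ 2 = (c / γ) ^ 2 * ‖x‖ ^ 2 := by
    rw [norm_smul, mul_pow, Real.norm_eq_abs, sq_abs]
  have hnΦx : ‖(c / γ) • Φ x‖ ^ 2 = (c / γ) ^ 2 * ‖Φ x‖ ^ 2 := by
    rw [norm_smul, mul_pow, Real.norm_eq_abs, sq_abs]
  have hM1 : ∑ b ∈ S, μ b * ‖c • b‖ ^ 2 = (c ^ 2 / γ) * ∑ b ∈ S, σ b * ‖b‖ ^ 2 := by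
    rw [Finset.mul_sum]
    apply Finset.sum_congr rfl
    intro b _
    rw [norm_smul, mul_pow, Real.norm_eq_abs, sq_abs, hμdef]
    field_simp
  have hM2 : ∑ b ∈ S, μ b * ‖c • Φ b‖ ^ 2 = (c ^ 2 / γ) * ∑ b ∈ S, σ b * ‖Φ b‖ ^ 2 := by
    rw [Finset.mul_sum]
    apply Finset.sum_congr rfl
    intro b _
    rw [norm_smul, mul_pow, Real.norm_eq_abs, sq_abs, hμdef]
    field_simp
  -- put it together
  have hfactored : ∑ t ∈ T, (∏ l, μ (t l)) * (α ^ 2 * ‖∑ i : Fin k, c • (t i : H)‖ ^ 2)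
      = α ^ 2 * ∑ t ∈ T, (∏ l, μ (t l)) * ‖∑ i : Fin k, c • (t i : H)‖ ^ 2 := by
    rw [Finset.mul_sum]
    apply Finset.sum_congr rfl
    intro t _
    ring
  rw [hfactored, eL, eR, hm1, hm2, hnx, hnΦx, hM1, hM2] at hsum
  set P : ℝ := ∑ b ∈ S, σ b * ‖b‖ ^ 2
  set Q : ℝ := ∑ b ∈ S, σ b * ‖Φ b‖ ^ 2
  have hkne : (k : ℝ) ≠ 0 := ne_of_gt hk0
  have hγne : γ ≠ 0 := ne_of_gt hγ
  have hk1' : (0 : ℝ) < (k : ℝ) - 1 := by linarith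
  have hck : c = γ / k := rfl
  have e1 : (γ / (k : ℝ)) ^ 2 / γ = γ / (k : ℝ) ^ 2 := by
    field_simp
  have e2 : (γ / (k : ℝ) / γ) ^ 2 = 1 / (k : ℝ) ^ 2 := by
    have h : γ / (k : ℝ) / γ = 1 / (k : ℝ) := by
      field_simp
    rw [h, div_pow, one_pow]
  rw [hck, e1, e2] at hsum
  have hsum3 : α ^ 2 * (γ * P + ((k : ℝ) - 1) * ‖x‖ ^ 2) ≤ γ * Q + ((k : ℝ) - 1) * ‖Φ x‖ ^ 2 := by
    have h := mul_le_mul_of_nonneg_left hsum hk0.le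
    calc α ^ 2 * (γ * P + ((k : ℝ) - 1) * ‖x‖ ^ 2)
        = (k : ℝ) * (α ^ 2 * ((k : ℝ) * (γ / (k : ℝ) ^ 2 * P)
            + ((k : ℝ) ^ 2 - (k : ℝ)) * (1 / (k : ℝ) ^ 2 * ‖x‖ ^ 2))) := by
          field_simp
      _ ≤ (k : ℝ) * ((k : ℝ) * (γ / (k : ℝ) ^ 2 * Q)
            + ((k : ℝ) ^ 2 - (k : ℝ)) * (1 / (k : ℝ) ^ 2 * ‖Φ x‖ ^ 2)) := h
      _ = γ * Q + ((k : ℝ) - 1) * ‖Φ x‖ ^ 2 := by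
          field_simp
  rw [sub_le_iff_le_add, ← sub_le_iff_le_add', div_mul_eq_mul_div, le_div_iff₀ hk1']
  nlinarith [hsum3]
end

section
/- Let H be a finite-dimensional real inner product space, B a set of unit-norm atoms that is centrally symmetric and spanning, k > 1 an integer, A the k-simple subset relative to B, and Φ : H → ℝ^m a linear map having the (k, α, β)-generalized-weaken-RIP for distortions α, β > 0. Then for every x ∈ H, ‖Φx‖₂² ≥ α²‖x‖² − ‖x‖_B² (β² − α²)/(k−1), where ‖·‖_B is the atom norm induced by B. -/
open scoped BigOperators

section Peel

variable {γ : Type*} {M : Type*} [AddCommMonoid M]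

lemma sum_piFinset_cons (S : Finset γ) (k : ℕ) (F : (Fin (k+1) → γ) → M) :
    ∑ f ∈ Fintype.piFinset (fun _ : Fin (k+1) => S), F f
      = ∑ a ∈ S, ∑ g ∈ Fintype.piFinset (fun _ : Fin k => S), F (Fin.cons a g) := by
  rw [← Finset.sum_product']
  refine Finset.sum_nbij' (fun f => (f 0, Fin.tail f)) (fun p => Fin.cons p.1 p.2)
    ?_ ?_ ?_ ?_ ?_
  · intro f hf
    simp only [Fintype.mem_piFinset] at hf
    simp only [Finset.mem_product, Fintype.mem_piFinset]
    exact ⟨hf 0, fun i => hf _⟩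
  · intro p hp
    simp only [Finset.mem_product, Fintype.mem_piFinset] at hp
    simp only [Fintype.mem_piFinset]
    intro i
    refine Fin.cases ?_ ?_ i
    · simpa using hp.1
    · intro j; simpa using hp.2 j
  · intro f hf; simp [Fin.cons_self_tail]
  · intro p hp; simp [Fin.tail_cons]
  · intro f hf; simp [Fin.cons_self_tail]

end Peel

section Moments

set_option linter.unusedSectionVars false

local notation "⟪" x ", " y "⟫" => @inner ℝ _ _ x y

variable {H : Type*} [NormedAddCommGroup H] [InnerProductSpace ℝ H]
variable {F : Type*} [NormedAddCommGroup F] [InnerProductSpace ℝ F]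
variable (S : Finset H) (σ : H → ℝ)

lemma moment0 (k : ℕ) :
    ∑ f ∈ Fintype.piFinset (fun _ : Fin k => S), ∏ m, σ (f m) = (∑ b ∈ S, σ b) ^ k := by
  rw [← Finset.prod_univ_sum]
  simp

lemma moment1 (k : ℕ) :
    ∑ f ∈ Fintype.piFinset (fun _ : Fin (k+1) => S),
        (∏ m, σ (f m)) • (∑ j, f j)
      = (((k : ℝ) + 1) * (∑ b ∈ S, σ b) ^ k) • (∑ b ∈ S, σ b • b) := by
  induction k with
  | zero =>
    rw [sum_piFinset_cons]
    simp
  | succ k ih =>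
    rw [sum_piFinset_cons]
    have key : ∀ a ∈ S,
        ∑ g ∈ Fintype.piFinset (fun _ : Fin (k+1) => S),
          (∏ m, σ ((Fin.cons a g : Fin (k+2) → H) m))
            • (∑ j, (Fin.cons a g : Fin (k+2) → H) j)
        = ((σ a) * (∑ b ∈ S, σ b)^(k+1)) • a
          + σ a • ((((k : ℝ) + 1) * (∑ b ∈ S, σ b) ^ k) • (∑ b ∈ S, σ b • b)) := by
      intro a _
      have hg : ∀ g : Fin (k+1) → H,
          (∏ m, σ ((Fin.cons a g : Fin (k+2) → H) m))
            • (∑ j, (Fin.cons a g : Fin (k+2) → H) j)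
          = (σ a * ∏ m, σ (g m)) • a + σ a • ((∏ m, σ (g m)) • (∑ j, g j)) := by
        intro g
        rw [Fin.prod_univ_succ, Fin.sum_univ_succ]
        simp only [Fin.cons_zero, Fin.cons_succ]
        rw [smul_add, smul_smul]
      rw [Finset.sum_congr rfl (fun g _ => hg g), Finset.sum_add_distrib,
        ← Finset.sum_smul, ← Finset.mul_sum, moment0, ← Finset.smul_sum, ih]
    rw [Finset.sum_congr rfl key, Finset.sum_add_distrib]
    have h1 : ∑ a ∈ S, (σ a * (∑ b ∈ S, σ b)^(k+1)) • a
        = ((∑ b ∈ S, σ b)^(k+1)) • (∑ b ∈ S, σ b • b) := by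
      rw [Finset.smul_sum]
      exact Finset.sum_congr rfl fun a _ => by rw [smul_smul, mul_comm]
    have h2 : ∑ a ∈ S, σ a • ((((k : ℝ) + 1) * (∑ b ∈ S, σ b) ^ k) • (∑ b ∈ S, σ b • b))
        = (∑ b ∈ S, σ b) • ((((k : ℝ) + 1) * (∑ b ∈ S, σ b) ^ k) • (∑ b ∈ S, σ b • b)) := by
      rw [← Finset.sum_smul]
    rw [h1, h2]
    match_scalars
    push_cast
    ring

lemma moment2 (Ψ : H →ₗ[ℝ] F) (k : ℕ) :
    ∑ f ∈ Fintype.piFinset (fun _ : Fin (k+1) => S),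
        (∏ m, σ (f m)) * ‖Ψ (∑ j, f j)‖ ^ 2
      = ((k : ℝ) + 1) * (∑ b ∈ S, σ b) ^ k * (∑ b ∈ S, σ b * ‖Ψ b‖ ^ 2)
        + ((k : ℝ) + 1) * (k : ℝ) * (∑ b ∈ S, σ b) ^ (k - 1)
            * ‖Ψ (∑ b ∈ S, σ b • b)‖ ^ 2 := by
  induction k with
  | zero =>
    rw [sum_piFinset_cons]
    simp
  | succ k ih =>
    rw [sum_piFinset_cons]
    have key : ∀ a ∈ S,
        ∑ g ∈ Fintype.piFinset (fun _ : Fin (k+1) => S),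
          (∏ m, σ ((Fin.cons a g : Fin (k+2) → H) m))
            * ‖Ψ (∑ j, (Fin.cons a g : Fin (k+2) → H) j)‖ ^ 2
        = σ a * ((∑ b ∈ S, σ b)^(k+1) * ‖Ψ a‖ ^ 2)
          + σ a * (2 * ((((k : ℝ) + 1) * (∑ b ∈ S, σ b) ^ k) * ⟪Ψ a, Ψ (∑ b ∈ S, σ b • b)⟫))
          + σ a * (((k : ℝ) + 1) * (∑ b ∈ S, σ b) ^ k * (∑ b ∈ S, σ b * ‖Ψ b‖ ^ 2)
              + ((k : ℝ) + 1) * (k : ℝ) * (∑ b ∈ S, σ b) ^ (k - 1)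
                  * ‖Ψ (∑ b ∈ S, σ b • b)‖ ^ 2) := by
      intro a _
      have hg : ∀ g : Fin (k+1) → H,
          (∏ m, σ ((Fin.cons a g : Fin (k+2) → H) m))
            * ‖Ψ (∑ j, (Fin.cons a g : Fin (k+2) → H) j)‖ ^ 2
          = σ a * ((∏ m, σ (g m)) * ‖Ψ a‖ ^ 2)
            + σ a * (2 * ⟪Ψ a, Ψ ((∏ m, σ (g m)) • (∑ j, g j))⟫)
            + σ a * ((∏ m, σ (g m)) * ‖Ψ (∑ j, g j)‖ ^ 2) := by
        intro g
        rw [Fin.prod_univ_succ, Fin.sum_univ_succ]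
        simp only [Fin.cons_zero, Fin.cons_succ]
        rw [map_add, norm_add_sq_real, map_smul, real_inner_smul_right]
        ring
      have hin : ∑ g ∈ Fintype.piFinset (fun _ : Fin (k+1) => S),
          ⟪Ψ a, Ψ ((∏ m, σ (g m)) • (∑ j, g j))⟫
          = (((k : ℝ) + 1) * (∑ b ∈ S, σ b) ^ k) * ⟪Ψ a, Ψ (∑ b ∈ S, σ b • b)⟫ := by
        rw [← inner_sum, ← map_sum, moment1, map_smul, real_inner_smul_right]
      rw [Finset.sum_congr rfl (fun g _ => hg g), Finset.sum_add_distrib,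
        Finset.sum_add_distrib]
      have hA : ∑ g ∈ Fintype.piFinset (fun _ : Fin (k+1) => S),
          σ a * ((∏ m, σ (g m)) * ‖Ψ a‖ ^ 2)
          = σ a * ((∑ b ∈ S, σ b)^(k+1) * ‖Ψ a‖ ^ 2) := by
        rw [← Finset.mul_sum, ← Finset.sum_mul, moment0]
      have hB : ∑ g ∈ Fintype.piFinset (fun _ : Fin (k+1) => S),
          σ a * (2 * ⟪Ψ a, Ψ ((∏ m, σ (g m)) • (∑ j, g j))⟫)
          = σ a * (2 * ((((k : ℝ) + 1) * (∑ b ∈ S, σ b) ^ k)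
              * ⟪Ψ a, Ψ (∑ b ∈ S, σ b • b)⟫)) := by
        rw [← Finset.mul_sum, ← Finset.mul_sum, hin]
      have hC : ∑ g ∈ Fintype.piFinset (fun _ : Fin (k+1) => S),
          σ a * ((∏ m, σ (g m)) * ‖Ψ (∑ j, g j)‖ ^ 2)
          = σ a * (((k : ℝ) + 1) * (∑ b ∈ S, σ b) ^ k * (∑ b ∈ S, σ b * ‖Ψ b‖ ^ 2)
              + ((k : ℝ) + 1) * (k : ℝ) * (∑ b ∈ S, σ b) ^ (k - 1)
                  * ‖Ψ (∑ b ∈ S, σ b • b)‖ ^ 2) := by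
        rw [← Finset.mul_sum, ih]
      rw [hA, hB, hC]
    rw [Finset.sum_congr rfl key, Finset.sum_add_distrib, Finset.sum_add_distrib]
    have e1 : ∑ a ∈ S, σ a * ((∑ b ∈ S, σ b)^(k+1) * ‖Ψ a‖ ^ 2)
        = (∑ b ∈ S, σ b)^(k+1) * (∑ b ∈ S, σ b * ‖Ψ b‖ ^ 2) := by
      rw [Finset.mul_sum]
      exact Finset.sum_congr rfl fun a _ => by ring
    have e2 : ∑ a ∈ S, σ a * (2 * ((((k : ℝ) + 1) * (∑ b ∈ S, σ b) ^ k)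
          * ⟪Ψ a, Ψ (∑ b ∈ S, σ b • b)⟫))
        = 2 * (((k : ℝ) + 1) * (∑ b ∈ S, σ b) ^ k) * ‖Ψ (∑ b ∈ S, σ b • b)‖ ^ 2 := by
      have hn : ∑ a ∈ S, σ a * ⟪Ψ a, Ψ (∑ b ∈ S, σ b • b)⟫
          = ‖Ψ (∑ b ∈ S, σ b • b)‖ ^ 2 := by
        have h1 : ⟪∑ a ∈ S, σ a • Ψ a, Ψ (∑ b ∈ S, σ b • b)⟫
            = ∑ a ∈ S, σ a * ⟪Ψ a, Ψ (∑ b ∈ S, σ b • b)⟫ := by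
          rw [sum_inner]
          exact Finset.sum_congr rfl fun a _ => real_inner_smul_left _ _ _
        have h2 : ∑ a ∈ S, σ a • Ψ a = Ψ (∑ b ∈ S, σ b • b) := by
          rw [map_sum]
          exact Finset.sum_congr rfl fun a _ => (map_smul Ψ _ _).symm
        rw [← h1, h2, real_inner_self_eq_norm_sq]
      calc ∑ a ∈ S, σ a * (2 * ((((k : ℝ) + 1) * (∑ b ∈ S, σ b) ^ k)
            * ⟪Ψ a, Ψ (∑ b ∈ S, σ b • b)⟫))
          = 2 * (((k : ℝ) + 1) * (∑ b ∈ S, σ b) ^ k)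
              * ∑ a ∈ S, σ a * ⟪Ψ a, Ψ (∑ b ∈ S, σ b • b)⟫ := by
            rw [Finset.mul_sum]; exact Finset.sum_congr rfl fun a _ => by ring
        _ = _ := by rw [hn]
    have e3 : ∑ a ∈ S, σ a * (((k : ℝ) + 1) * (∑ b ∈ S, σ b) ^ k * (∑ b ∈ S, σ b * ‖Ψ b‖ ^ 2)
          + ((k : ℝ) + 1) * (k : ℝ) * (∑ b ∈ S, σ b) ^ (k - 1)
              * ‖Ψ (∑ b ∈ S, σ b • b)‖ ^ 2)
        = (∑ b ∈ S, σ b) * (((k : ℝ) + 1) * (∑ b ∈ S, σ b) ^ k * (∑ b ∈ S, σ b * ‖Ψ b‖ ^ 2)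
          + ((k : ℝ) + 1) * (k : ℝ) * (∑ b ∈ S, σ b) ^ (k - 1)
              * ‖Ψ (∑ b ∈ S, σ b • b)‖ ^ 2) := by
      rw [← Finset.sum_mul]
    rw [e1, e2, e3]
    have hTk : ((k : ℝ)) * ((∑ b ∈ S, σ b) * (∑ b ∈ S, σ b) ^ (k - 1))
        = (k : ℝ) * (∑ b ∈ S, σ b) ^ k := by
      cases k with
      | zero => simp
      | succ n => rw [← pow_succ']; norm_num
    push_cast
    linear_combination ((k : ℝ) + 1) * ‖Ψ (∑ b ∈ S, σ b • b)‖ ^ 2 * hTk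

end Moments

section Core

variable {H : Type*} [NormedAddCommGroup H] [InnerProductSpace ℝ H]

lemma core_bound {m : ℕ} (B : Set H)
    (hBunit : ∀ b ∈ B, ‖b‖ = 1)
    (k : ℕ) (hk : 1 < k) (α β : ℝ) (hα : 0 < α)
    (Φ : H →ₗ[ℝ] EuclideanSpace ℝ (Fin m))
    (hRIPa : ∀ u ∈ simpleSet B k, α * ‖u‖ ≤ ‖Φ u‖)
    (hRIPb : ∀ b ∈ B, ‖Φ b‖ ≤ β)
    (S : Finset H) (σ : H → ℝ) (hSB : ↑S ⊆ B) (hσ : ∀ b ∈ S, 0 ≤ σ b) :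
    α ^ 2 * ‖∑ b ∈ S, σ b • b‖ ^ 2 - ‖Φ (∑ b ∈ S, σ b • b)‖ ^ 2
      ≤ (∑ b ∈ S, σ b) ^ 2 * (β ^ 2 - α ^ 2) / ((k : ℝ) - 1) := by
  obtain ⟨n, rfl⟩ : ∃ n, k = n + 2 := ⟨k - 2, by omega⟩
  set T := ∑ b ∈ S, σ b with hT
  set x := ∑ b ∈ S, σ b • b with hx
  have hT0 : 0 ≤ T := Finset.sum_nonneg hσ
  by_cases hTz : T = 0
  · rw [hT] at hTz
    have hzero := (Finset.sum_eq_zero_iff_of_nonneg hσ).1 hTz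
    have hx0 : x = 0 := Finset.sum_eq_zero fun b hb => by rw [hzero b hb, zero_smul]
    rw [hx0, hT, hTz]
    simp
  · have hTpos : 0 < T := lt_of_le_of_ne hT0 (Ne.symm hTz)
    have hid := moment2 S σ (LinearMap.id : H →ₗ[ℝ] H) (n+1)
    have hPhi := moment2 S σ Φ (n+1)
    simp only [LinearMap.id_coe, id_eq, Nat.add_sub_cancel] at hid hPhi
    push_cast at hid hPhi
    rw [← hT, ← hx] at hid hPhi
    have hMid : ∑ b ∈ S, σ b * ‖b‖ ^ 2 = T := by
      rw [hT]
      exact Finset.sum_congr rfl fun b hb => by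
        rw [hBunit b (hSB hb), one_pow, mul_one]
    rw [hMid] at hid
    have hMPhi : ∑ b ∈ S, σ b * ‖Φ b‖ ^ 2 ≤ β ^ 2 * T := by
      calc ∑ b ∈ S, σ b * ‖Φ b‖ ^ 2 ≤ ∑ b ∈ S, σ b * β ^ 2 :=
            Finset.sum_le_sum fun b hb => mul_le_mul_of_nonneg_left
              (pow_le_pow_left₀ (norm_nonneg _) (hRIPb b (hSB hb)) 2) (hσ b hb)
        _ = β ^ 2 * T := by rw [← Finset.sum_mul, ← hT, mul_comm]
    have hpoint : ∀ f ∈ Fintype.piFinset (fun _ : Fin (n+2) => S),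
        (∏ mm, σ (f mm)) * (α ^ 2 * ‖∑ j, f j‖ ^ 2)
          ≤ (∏ mm, σ (f mm)) * ‖Φ (∑ j, f j)‖ ^ 2 := by
      intro f hf
      have hfS : ∀ i, f i ∈ S := by
        simpa [Fintype.mem_piFinset] using hf
      have hw : 0 ≤ ∏ mm, σ (f mm) :=
        Finset.prod_nonneg fun i _ => hσ _ (hfS i)
      have hu : (∑ j, f j) ∈ simpleSet B (n+2) :=
        ⟨fun _ => 1, f, fun _ => zero_le_one, fun i => hSB (hfS i), by simp⟩
      have hR := hRIPa _ hu
      have hsq : (α * ‖∑ j, f j‖) ^ 2 ≤ ‖Φ (∑ j, f j)‖ ^ 2 :=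
        pow_le_pow_left₀ (by positivity) hR 2
      have hfin : α ^ 2 * ‖∑ j, f j‖ ^ 2 ≤ ‖Φ (∑ j, f j)‖ ^ 2 := by
        calc α ^ 2 * ‖∑ j, f j‖ ^ 2 = (α * ‖∑ j, f j‖) ^ 2 := by ring
          _ ≤ _ := hsq
      exact mul_le_mul_of_nonneg_left hfin hw
    have hsums := Finset.sum_le_sum hpoint
    have hLrw : ∑ f ∈ Fintype.piFinset (fun _ : Fin (n+2) => S),
        (∏ mm, σ (f mm)) * (α ^ 2 * ‖∑ j, f j‖ ^ 2)
        = α ^ 2 * ∑ f ∈ Fintype.piFinset (fun _ : Fin (n+2) => S),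
            (∏ mm, σ (f mm)) * ‖∑ j, f j‖ ^ 2 := by
      rw [Finset.mul_sum]
      exact Finset.sum_congr rfl fun f _ => by ring
    rw [hLrw, hid, hPhi] at hsums
    -- arithmetic
    push_cast
    rw [show ((n : ℝ) + 2) - 1 = (n : ℝ) + 1 from by ring,
      le_div_iff₀ (by positivity : (0:ℝ) < (n : ℝ) + 1)]
    have hp1 : T ^ (n + 1) = T ^ n * T := pow_succ T n
    rw [hp1] at hsums
    have hmul : (((n : ℝ) + 1 + 1) * T ^ n * T) * (∑ b ∈ S, σ b * ‖Φ b‖ ^ 2)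
        ≤ (((n : ℝ) + 1 + 1) * T ^ n * T) * (β ^ 2 * T) :=
      mul_le_mul_of_nonneg_left hMPhi (by positivity)
    have hcn : (0:ℝ) < ((n : ℝ) + 1 + 1) * T ^ n := by positivity
    have hstep : (((n : ℝ) + 1 + 1) * T ^ n)
          * (((n : ℝ) + 1) * (α ^ 2 * ‖x‖ ^ 2 - ‖Φ x‖ ^ 2))
        ≤ (((n : ℝ) + 1 + 1) * T ^ n) * (T ^ 2 * (β ^ 2 - α ^ 2)) := by
      nlinarith [hsums, hmul]
    have hfinal := le_of_mul_le_mul_left hstep hcn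
    linarith [hfinal]

end Core

/-- Under the generalized weaken-RIP,
`‖Φx‖² ≥ α²‖x‖² − ‖x‖_B²(β² − α²)/(k−1)` for every `x`. -/
theorem weakenRIP_atomNorm_lower_bound
    {H : Type*} [NormedAddCommGroup H] [InnerProductSpace ℝ H] [FiniteDimensional ℝ H]
    {m : ℕ} (B : Set H)
    (hBsym : ∀ b ∈ B, -b ∈ B) (hBspan : Spans B) (hBunit : ∀ b ∈ B, ‖b‖ = 1)
    (k : ℕ) (hk : 1 < k) (α β : ℝ) (hα : 0 < α) (hβ : 0 < β)
    (Φ : H →ₗ[ℝ] EuclideanSpace ℝ (Fin m))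
    (hRIPa : ∀ u ∈ simpleSet B k, α * ‖u‖ ≤ ‖Φ u‖)
    (hRIPb : ∀ b ∈ B, ‖Φ b‖ ≤ β) :
    ∀ x : H,
      α ^ 2 * ‖x‖ ^ 2 - atomNorm B x ^ 2 * (β ^ 2 - α ^ 2) / ((k : ℝ) - 1)
        ≤ ‖Φ x‖ ^ 2 := by
  intro x
  set setX : Set ℝ := { r : ℝ | ∃ (S : Finset H) (σ : H → ℝ), ↑S ⊆ B ∧ (∀ b ∈ S, 0 ≤ σ b) ∧
    x = ∑ b ∈ S, σ b • b ∧ r = ∑ b ∈ S, σ b } with hsetX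
  have hIdef : atomNorm B x = sInf setX := rfl
  set L : ℝ := α ^ 2 * ‖x‖ ^ 2 - ‖Φ x‖ ^ 2 with hLdef
  set c : ℝ := (β ^ 2 - α ^ 2) / ((k : ℝ) - 1) with hcdef
  have hmem : ∀ r ∈ setX, L ≤ r ^ 2 * c := by
    rintro r ⟨S, σ, hSB, hσ, hxeq, rfl⟩
    have hcore := core_bound B hBunit k hk α β hα Φ hRIPa hRIPb S σ hSB hσ
    rw [← hxeq] at hcore
    rw [hLdef, hcdef, mul_div_assoc] at *
    exact hcore
  have hne : setX.Nonempty := by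
    obtain ⟨S, σ, h1, h2, h3⟩ := hBspan x
    exact ⟨_, S, σ, h1, h2, h3, rfl⟩
  have hbdd : ∀ r ∈ setX, 0 ≤ r := by
    rintro r ⟨S, σ, _, hσ, _, rfl⟩
    exact Finset.sum_nonneg hσ
  have hI0 : 0 ≤ sInf setX := le_csInf hne hbdd
  have key : L ≤ (atomNorm B x) ^ 2 * c := by
    rw [hIdef]
    rcases le_or_gt 0 c with hc0 | hc0
    · rcases le_or_gt L 0 with hL0 | hL0
      · have : (0:ℝ) ≤ (sInf setX) ^ 2 * c := mul_nonneg (sq_nonneg _) hc0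
        linarith
      · have hcpos : 0 < c := by
          rcases hc0.eq_or_lt with he | hlt
          · exfalso
            obtain ⟨r, hr⟩ := hne
            have := hmem r hr
            rw [← he] at this
            simp at this
            linarith
          · exact hlt
        have hsqle : ∀ r ∈ setX, Real.sqrt (L / c) ≤ r := by
          intro r hr
          have h1 : L / c ≤ r ^ 2 := (div_le_iff₀ hcpos).2 (hmem r hr)
          have h2 := Real.sqrt_le_sqrt h1
          rwa [Real.sqrt_sq (hbdd r hr)] at h2
        have h2 : Real.sqrt (L / c) ≤ sInf setX := le_csInf hne hsqle
        have h3 : (Real.sqrt (L / c)) ^ 2 ≤ (sInf setX) ^ 2 :=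
          pow_le_pow_left₀ (Real.sqrt_nonneg _) h2 2
        rw [Real.sq_sqrt (by positivity : (0:ℝ) ≤ L / c)] at h3
        calc L = (L / c) * c := by field_simp
          _ ≤ (sInf setX) ^ 2 * c := mul_le_mul_of_nonneg_right h3 hcpos.le
    · obtain ⟨r, hr⟩ := hne
      have h5 : sInf setX ≤ r := csInf_le ⟨0, fun y hy => hbdd y hy⟩ hr
      have h6 : (sInf setX) ^ 2 ≤ r ^ 2 := pow_le_pow_left₀ hI0 h5 2
      have h7 : r ^ 2 * c ≤ (sInf setX) ^ 2 * c := mul_le_mul_of_nonpos_right h6 hc0.le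
      exact (hmem r hr).trans h7
  rw [mul_div_assoc, ← hcdef]
  rw [hLdef] at key
  linarith [key]
end

section
/- Let Γ ∈ ℝ^{m×n} be a matrix having the (k, α, β)-weaken-RIP for an integer k with 1 < k ≤ n and distortions α, β > 0. Then for every x ∈ ℝⁿ, ‖Γx‖₂² ≥ α²‖x‖₂² − ‖x‖₁² (β² − α²)/(k−1). -/
open scoped BigOperators

open Finset

lemma key_factor {k n : ℕ} (H : Fin k → Fin n → ℝ) :
    ∑ f : Fin k → Fin n, ∏ u, H u (f u) = ∏ u, ∑ i, H u i := by
  rw [Finset.prod_univ_sum, Fintype.piFinset_univ]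

lemma sum_comp_count {k n : ℕ} (f : Fin k → Fin n) (v : Fin n → ℝ) :
    ∑ s : Fin k, v (f s)
      = ∑ i : Fin n, ((univ.filter (fun s => f s = i)).card : ℝ) * v i := by
  rw [← Finset.sum_fiberwise univ f (fun s => v (f s))]
  refine Finset.sum_congr rfl fun i _ => ?_
  have h1 : ∑ s ∈ univ.filter (fun s => f s = i), v (f s)
      = ∑ s ∈ univ.filter (fun s => f s = i), v i :=
    Finset.sum_congr rfl fun s hs => by rw [(Finset.mem_filter.mp hs).2]
  rw [h1, Finset.sum_const, nsmul_eq_mul]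
open Finset

lemma tuple_diag {k n : ℕ} (p : Fin n → ℝ) (g : Fin n → Fin n → ℝ) (s : Fin k) :
    ∑ f : Fin k → Fin n, (∏ u, p (f u)) * g (f s) (f s)
      = (∑ i, p i) ^ (k - 1) * ∑ i, p i * g i i := by
  have step1 : ∀ f : Fin k → Fin n, (∏ u, p (f u)) * g (f s) (f s)
      = ∑ a, g a a * ∏ u, (p (f u) *
          (if u = s then (if f u = a then (1:ℝ) else 0) else 1)) := by
    intro f
    have hI : ∀ a : Fin n,
        (∏ u, (if u = s then (if f u = a then (1:ℝ) else 0) else 1))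
          = (if f s = a then 1 else 0) := by
      intro a
      rw [← Finset.mul_prod_erase univ _ (mem_univ s)]
      rw [Finset.prod_eq_one (fun u hu => by simp [Finset.mem_erase.mp hu |>.1])]
      simp
    have : ∀ a : Fin n, (∏ u, (p (f u) *
          (if u = s then (if f u = a then (1:ℝ) else 0) else 1)))
        = (∏ u, p (f u)) * (if f s = a then 1 else 0) := by
      intro a
      rw [Finset.prod_mul_distrib, hI]
    simp only [this]
    simp [mul_ite, Finset.sum_ite_eq, mul_comm]
  rw [Finset.sum_congr rfl fun f _ => step1 f, Finset.sum_comm]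
  have hcol : ∀ a : Fin n,
      ∑ f : Fin k → Fin n, ∏ u, (p (f u) *
          (if u = s then (if f u = a then (1:ℝ) else 0) else 1))
        = p a * (∑ i, p i) ^ (k - 1) := by
    intro a
    rw [key_factor (fun u i => p i * (if u = s then (if i = a then (1:ℝ) else 0) else 1))]
    rw [← Finset.mul_prod_erase univ _ (mem_univ s)]
    have h2 : (∑ i, p i * (if s = s then (if i = a then (1:ℝ) else 0) else 1)) = p a := by
      simp [mul_ite, Finset.sum_ite_eq']
    rw [h2]
    have h3 : ∀ u ∈ univ.erase s,
        (∑ i, p i * (if u = s then (if i = a then (1:ℝ) else 0) else 1)) = ∑ i, p i := by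
      intro u hu
      simp [Finset.mem_erase.mp hu |>.1]
    rw [Finset.prod_congr rfl h3, Finset.prod_const, Finset.card_erase_of_mem (mem_univ s),
      Finset.card_univ, Fintype.card_fin]
  rw [Finset.sum_congr rfl fun a _ => by rw [← Finset.mul_sum, hcol a]]
  rw [Finset.mul_sum]
  exact Finset.sum_congr rfl fun a _ => by ring
open Finset

lemma tuple_pair {k n : ℕ} (p : Fin n → ℝ) (g : Fin n → Fin n → ℝ) (s t : Fin k)
    (hst : s ≠ t) :
    ∑ f : Fin k → Fin n, (∏ u, p (f u)) * g (f s) (f t)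
      = (∑ i, p i) ^ (k - 2) * ∑ i, ∑ j, p i * p j * g i j := by
  have hts : t ∈ univ.erase s := Finset.mem_erase.mpr ⟨Ne.symm hst, mem_univ t⟩
  have step1 : ∀ f : Fin k → Fin n, (∏ u, p (f u)) * g (f s) (f t)
      = ∑ a, ∑ b, g a b * ∏ u, (p (f u) *
          (if u = s then (if f u = a then (1:ℝ) else 0)
           else if u = t then (if f u = b then 1 else 0) else 1)) := by
    intro f
    have hI : ∀ a b : Fin n,
        (∏ u, (if u = s then (if f u = a then (1:ℝ) else 0)
           else if u = t then (if f u = b then 1 else 0) else 1))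
          = (if f s = a then 1 else 0) * (if f t = b then 1 else 0) := by
      intro a b
      rw [← Finset.mul_prod_erase univ _ (mem_univ s),
        ← Finset.mul_prod_erase _ _ hts]
      rw [Finset.prod_eq_one (fun u hu => ?_)]
      · simp [hst, Ne.symm hst, mul_assoc]
      · have h1 := Finset.mem_erase.mp hu
        have h2 := Finset.mem_erase.mp h1.2
        simp [h1.1, h2.1]
    have hprod : ∀ a b : Fin n, (∏ u, (p (f u) *
          (if u = s then (if f u = a then (1:ℝ) else 0)
           else if u = t then (if f u = b then 1 else 0) else 1)))
        = (∏ u, p (f u)) * ((if f s = a then 1 else 0) * (if f t = b then 1 else 0)) := by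
      intro a b
      rw [Finset.prod_mul_distrib, hI]
    simp only [hprod]
    simp [mul_ite, Finset.sum_ite_eq, mul_comm]
  rw [Finset.sum_congr rfl fun f _ => step1 f, Finset.sum_comm]
  have hcol : ∀ a b : Fin n,
      ∑ f : Fin k → Fin n, ∏ u, (p (f u) *
          (if u = s then (if f u = a then (1:ℝ) else 0)
           else if u = t then (if f u = b then 1 else 0) else 1))
        = p a * (p b * (∑ i, p i) ^ (k - 2)) := by
    intro a b
    rw [key_factor (fun u i => p i *
          (if u = s then (if i = a then (1:ℝ) else 0)
           else if u = t then (if i = b then 1 else 0) else 1))]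
    rw [← Finset.mul_prod_erase univ _ (mem_univ s), ← Finset.mul_prod_erase _ _ hts]
    have h2 : (∑ i, p i * (if s = s then (if i = a then (1:ℝ) else 0)
        else if s = t then (if i = b then 1 else 0) else 1)) = p a := by
      simp [mul_ite, Finset.sum_ite_eq']
    have h2' : (∑ i, p i * (if t = s then (if i = a then (1:ℝ) else 0)
        else if t = t then (if i = b then 1 else 0) else 1)) = p b := by
      simp [Ne.symm hst, mul_ite, Finset.sum_ite_eq']
    rw [h2, h2']
    have h3 : ∀ u ∈ (univ.erase s).erase t,
        (∑ i, p i * (if u = s then (if i = a then (1:ℝ) else 0)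
           else if u = t then (if i = b then 1 else 0) else 1)) = ∑ i, p i := by
      intro u hu
      have h1 := Finset.mem_erase.mp hu
      have h4 := Finset.mem_erase.mp h1.2
      simp [h1.1, h4.1]
    rw [Finset.prod_congr rfl h3, Finset.prod_const,
      Finset.card_erase_of_mem hts, Finset.card_erase_of_mem (mem_univ s),
      Finset.card_univ, Fintype.card_fin]
    have hkk : k - 1 - 1 = k - 2 := by omega
    rw [hkk]
  have inner : ∀ a : Fin n,
      (∑ b, ∑ f : Fin k → Fin n, g a b * ∏ u, (p (f u) *
          (if u = s then (if f u = a then (1:ℝ) else 0)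
           else if u = t then (if f u = b then 1 else 0) else 1)))
        = ∑ b, g a b * (p a * (p b * (∑ i, p i) ^ (k - 2))) :=
    fun a => Finset.sum_congr rfl fun b _ => by rw [← Finset.mul_sum, hcol a b]
  rw [Finset.sum_congr rfl fun a _ => by rw [Finset.sum_comm, inner a]]
  rw [Finset.mul_sum]
  refine Finset.sum_congr rfl fun a _ => ?_
  rw [Finset.mul_sum]
  exact Finset.sum_congr rfl fun b _ => by ring
open Finset

lemma q_expand {m n : ℕ} (Γ : Matrix (Fin m) (Fin n) ℝ) (α : ℝ) (y : Fin n → ℝ) :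
    ∑ i, ∑ i', y i * y i' * ((∑ j, Γ j i * Γ j i') - (if i = i' then α ^ 2 else 0))
      = (∑ j, (Γ.mulVec y) j ^ 2) - α ^ 2 * ∑ i, y i ^ 2 := by
  have h1 : ∀ j, (Γ.mulVec y) j ^ 2 = ∑ i, ∑ i', y i * y i' * (Γ j i * Γ j i') := by
    intro j
    have h0 : (Γ.mulVec y) j = ∑ i, Γ j i * y i := rfl
    rw [h0, sq, Finset.sum_mul_sum]
    exact Finset.sum_congr rfl fun i _ => Finset.sum_congr rfl fun i' _ => by ring
  simp only [mul_sub, Finset.sum_sub_distrib]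
  congr 1
  · rw [Finset.sum_congr rfl fun j _ => h1 j]
    simp only [Finset.mul_sum]
    rw [Finset.sum_congr rfl fun i (_ : i ∈ univ) => Finset.sum_comm, Finset.sum_comm]
  · simp only [mul_ite, mul_zero, Finset.sum_ite_eq, mem_univ, if_true]
    rw [Finset.mul_sum]
    exact Finset.sum_congr rfl fun i _ => by ring

/-- Weaken-RIP yields the lower bound `‖Γx‖₂² ≥ α²‖x‖₂² − ‖x‖₁²(β² − α²)/(k−1)` for all `x`. -/
theorem weakenRIP_lower_bound_l1
    {m n : ℕ} (Γ : Matrix (Fin m) (Fin n) ℝ)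
    (k : ℕ) (hk1 : 1 < k) (hkn : k ≤ n)
    (α β : ℝ) (hα : 0 < α) (hβ : 0 < β)
    (hRIPa : ∀ x : Fin n → ℝ, {i | x i ≠ 0}.ncard ≤ k →
      α * Real.sqrt (∑ i, x i ^ 2) ≤ Real.sqrt (∑ j, (Γ.mulVec x) j ^ 2))
    (hRIPb : ∀ i : Fin n, Real.sqrt (∑ j, (Γ.mulVec (Pi.single i 1)) j ^ 2) ≤ β) :
    ∀ x : Fin n → ℝ,
      α ^ 2 * (∑ i, x i ^ 2) - (∑ i, |x i|) ^ 2 * (β ^ 2 - α ^ 2) / ((k : ℝ) - 1)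
        ≤ ∑ j, (Γ.mulVec x) j ^ 2 := by
  intro x
  set B : Fin n → Fin n → ℝ :=
    fun i i' => (∑ j, Γ j i * Γ j i') - (if i = i' then α ^ 2 else 0) with hBdef
  have qeq : ∀ y : Fin n → ℝ, ∑ i, ∑ i', y i * y i' * B i i'
      = (∑ j, (Γ.mulVec y) j ^ 2) - α ^ 2 * ∑ i, y i ^ 2 := q_expand Γ α
  have qnonneg : ∀ y : Fin n → ℝ, {i | y i ≠ 0}.ncard ≤ k →
      0 ≤ ∑ i, ∑ i', y i * y i' * B i i' := by
    intro y hy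
    rw [qeq]
    have h1 := hRIPa y hy
    have hA : 0 ≤ ∑ i, y i ^ 2 := Finset.sum_nonneg fun i _ => sq_nonneg _
    have hB2 : 0 ≤ ∑ j, (Γ.mulVec y) j ^ 2 := Finset.sum_nonneg fun j _ => sq_nonneg _
    have key := mul_self_le_mul_self (mul_nonneg hα.le (Real.sqrt_nonneg _)) h1
    have e1 := Real.mul_self_sqrt hA
    have e2 := Real.mul_self_sqrt hB2
    nlinarith [key, e1, e2]
  have hBdiag : ∀ i, B i i ≤ β ^ 2 - α ^ 2 := by
    intro i
    have h1 := hRIPb i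
    have h2 : (Γ.mulVec (Pi.single i 1)) = fun j => Γ j i := by
      funext j
      simp [Matrix.mulVec_single]
    rw [h2] at h1
    have hA : 0 ≤ ∑ j, Γ j i ^ 2 := Finset.sum_nonneg fun j _ => sq_nonneg _
    have key := mul_self_le_mul_self (Real.sqrt_nonneg _) h1
    rw [Real.mul_self_sqrt hA] at key
    have h3 : ∑ j, Γ j i * Γ j i = ∑ j, Γ j i ^ 2 :=
      Finset.sum_congr rfl fun j _ => by ring
    have h4 : B i i = (∑ j, Γ j i ^ 2) - α ^ 2 := by
      simp [hBdef, h3]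
    rw [h4]
    linarith [key]
  set σ : Fin n → ℝ := fun i => if x i < 0 then -1 else 1 with hσdef
  have hσsq : ∀ i, σ i * σ i = 1 := by
    intro i; by_cases h : x i < 0 <;> simp [hσdef, h]
  have hσx : ∀ i, σ i * |x i| = x i := by
    intro i
    by_cases h : x i < 0
    · simp [hσdef, h, abs_of_neg h]
    · simp [hσdef, h, abs_of_nonneg (le_of_not_gt h)]
  set C : Fin n → Fin n → ℝ := fun i j => σ i * σ j * B i j with hCdef
  set p : Fin n → ℝ := fun i => |x i| with hpdef
  set L : ℝ := ∑ i, p i with hLdef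
  have hp0 : ∀ i, 0 ≤ p i := fun i => abs_nonneg _
  have hL0 : 0 ≤ L := Finset.sum_nonneg fun i _ => hp0 i
  -- T ≥ 0
  have hT : 0 ≤ ∑ f : Fin k → Fin n, (∏ u, p (f u)) * (∑ s, ∑ t, C (f s) (f t)) := by
    refine Finset.sum_nonneg fun f _ =>
      mul_nonneg (Finset.prod_nonneg fun u _ => hp0 _) ?_
    set z : Fin n → ℝ :=
      fun i => σ i * ((Finset.univ.filter (fun s => f s = i)).card : ℝ) with hzdef
    have hzq : (∑ s, ∑ t, C (f s) (f t)) = ∑ i, ∑ i', z i * z i' * B i i' := by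
      rw [sum_comp_count f (fun i => ∑ t, C i (f t))]
      refine Finset.sum_congr rfl fun i _ => ?_
      rw [sum_comp_count f (fun i' => C i i')]
      rw [Finset.mul_sum]
      refine Finset.sum_congr rfl fun i' _ => ?_
      simp only [hzdef, hCdef]
      ring
    rw [hzq]
    refine qnonneg z ?_
    have hsub : {i | z i ≠ 0} ⊆ ↑(Finset.image f Finset.univ) := by
      intro i hi
      simp only [Set.mem_setOf_eq, hzdef] at hi
      have hcard : (Finset.univ.filter (fun s => f s = i)).card ≠ 0 := by
        intro h
        apply hi
        rw [h]
        simp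
      obtain ⟨s, hs⟩ := Finset.card_ne_zero.mp hcard
      have := (Finset.mem_filter.mp hs).2
      exact Finset.mem_coe.mpr (Finset.mem_image.mpr ⟨s, Finset.mem_univ s, this⟩)
    calc {i | z i ≠ 0}.ncard ≤ (↑(Finset.image f Finset.univ) : Set (Fin n)).ncard :=
          Set.ncard_le_ncard hsub (Finset.finite_toSet _)
      _ = (Finset.image f Finset.univ).card := Set.ncard_coe_finset _
      _ ≤ (Finset.univ : Finset (Fin k)).card := Finset.card_image_le
      _ = k := by simp
  set D : ℝ := ∑ i, p i * C i i with hDdef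
  set P : ℝ := ∑ i, ∑ j, p i * p j * C i j with hPdef
  have hsplit : ∑ f : Fin k → Fin n, (∏ u, p (f u)) * (∑ s, ∑ t, C (f s) (f t))
      = ∑ s : Fin k, ∑ t : Fin k,
          ∑ f : Fin k → Fin n, (∏ u, p (f u)) * C (f s) (f t) := by
    simp only [Finset.mul_sum]
    rw [Finset.sum_comm]
    exact Finset.sum_congr rfl fun s _ => Finset.sum_comm
  have hst : ∀ s t : Fin k,
      (∑ f : Fin k → Fin n, (∏ u, p (f u)) * C (f s) (f t))
        = if t = s then L ^ (k - 1) * D else L ^ (k - 2) * P := by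
    intro s t
    by_cases h : t = s
    · subst h
      rw [if_pos rfl]
      exact tuple_diag p C t
    · rw [if_neg h]
      exact tuple_pair p C s t (Ne.symm h)
  have hinner : ∀ s : Fin k,
      (∑ t : Fin k, if t = s then L ^ (k - 1) * D else L ^ (k - 2) * P)
        = (k : ℝ) * (L ^ (k - 2) * P) + (L ^ (k - 1) * D - L ^ (k - 2) * P) := by
    intro s
    have h5 : ∀ t : Fin k, (if t = s then L ^ (k - 1) * D else L ^ (k - 2) * P)
        = L ^ (k - 2) * P + (if t = s then L ^ (k - 1) * D - L ^ (k - 2) * P else 0) := by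
      intro t; by_cases h : t = s <;> simp [h]
    rw [Finset.sum_congr rfl fun t _ => h5 t, Finset.sum_add_distrib,
      Finset.sum_const, Finset.sum_ite_eq' Finset.univ s, Finset.card_univ,
      Fintype.card_fin]
    simp [nsmul_eq_mul]
  have hTval : 0 ≤ (k : ℝ) * ((k : ℝ) * (L ^ (k - 2) * P)
      + (L ^ (k - 1) * D - L ^ (k - 2) * P)) := by
    have e1 : ∑ f : Fin k → Fin n, (∏ u, p (f u)) * (∑ s, ∑ t, C (f s) (f t))
        = (k : ℝ) * ((k : ℝ) * (L ^ (k - 2) * P)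
            + (L ^ (k - 1) * D - L ^ (k - 2) * P)) := by
      rw [hsplit, Finset.sum_congr rfl fun s _ =>
        (Finset.sum_congr rfl fun t _ => hst s t).trans (hinner s),
        Finset.sum_const, Finset.card_univ, Fintype.card_fin, nsmul_eq_mul]
    rw [← e1]
    exact hT
  have hPq : P = (∑ j, (Γ.mulVec x) j ^ 2) - α ^ 2 * ∑ i, x i ^ 2 := by
    rw [← qeq x, hPdef]
    refine Finset.sum_congr rfl fun i _ => Finset.sum_congr rfl fun j _ => ?_
    simp only [hCdef]
    rw [← hσx i, ← hσx j]
    ring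
  have hD : D ≤ L * (β ^ 2 - α ^ 2) := by
    have step : D ≤ ∑ i, p i * (β ^ 2 - α ^ 2) := by
      refine Finset.sum_le_sum fun i _ => ?_
      have hcc : C i i = B i i := by
        simp only [hCdef]; rw [hσsq i, one_mul]
      rw [hcc]
      exact mul_le_mul_of_nonneg_left (hBdiag i) (hp0 i)
    calc D ≤ ∑ i, p i * (β ^ 2 - α ^ 2) := step
      _ = L * (β ^ 2 - α ^ 2) := by rw [← Finset.sum_mul, ← hLdef]
  have hk1' : (0 : ℝ) < (k : ℝ) - 1 := by
    have : (1 : ℝ) < (k : ℝ) := by exact_mod_cast hk1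
    linarith
  by_cases hL : L = 0
  · have hx0 : ∀ i, x i = 0 := by
      intro i
      have h6 : ∀ i ∈ Finset.univ, (0:ℝ) ≤ p i := fun i _ => hp0 i
      have := (Finset.sum_eq_zero_iff_of_nonneg h6).mp hL i (Finset.mem_univ i)
      simpa [hpdef] using this
    have h7 : ∑ i, x i ^ 2 = 0 := Finset.sum_eq_zero fun i _ => by rw [hx0 i]; ring
    rw [h7, hL]
    have h9 : (0:ℝ) ≤ ∑ j, (Γ.mulVec x) j ^ 2 := Finset.sum_nonneg fun j _ => sq_nonneg _
    norm_num
    linarith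
  · have hLpos : 0 < L := lt_of_le_of_ne hL0 (Ne.symm hL)
    have hpow : L ^ (k - 1) = L ^ (k - 2) * L := by
      rw [← pow_succ]
      congr 1
      omega
    have hW : 0 ≤ ((k : ℝ) - 1) * P + L * D := by
      have hc : 0 < (k : ℝ) * L ^ (k - 2) := by
        have hk0 : (0:ℝ) < (k:ℝ) := by exact_mod_cast Nat.zero_lt_of_lt hk1
        exact mul_pos hk0 (pow_pos hLpos _)
      have h9 : (k : ℝ) * ((k : ℝ) * (L ^ (k - 2) * P)
          + (L ^ (k - 1) * D - L ^ (k - 2) * P))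
        = ((k : ℝ) * L ^ (k - 2)) * (((k : ℝ) - 1) * P + L * D) := by
        rw [hpow]; ring
      rw [h9] at hTval
      exact le_of_mul_le_mul_left (by linarith) hc
    have hLD : L * D ≤ L * (L * (β ^ 2 - α ^ 2)) :=
      mul_le_mul_of_nonneg_left hD hL0
    -- goal : α^2 * ∑ x² - L^2 * (β²-α²)/((k:ℝ)-1) ≤ ∑ (Γx)²
    have h10 : α ^ 2 * (∑ i, x i ^ 2) - (∑ j, (Γ.mulVec x) j ^ 2)
        ≤ L ^ 2 * (β ^ 2 - α ^ 2) / ((k : ℝ) - 1) := by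
      rw [le_div_iff₀ hk1']
      nlinarith [hW, hLD, hPq]
    linarith [h10]
end

section
/- Let H be a finite-dimensional real inner product space, B a set of unit-norm atoms that is centrally symmetric and spanning, k > 1 an integer, A the k-simple subset relative to B, and suppose (H, A, ‖·‖_B) is a compressed sensing space with bound L > 0. Let Φ : H → ℝ^m be a linear map having the (k, α, β)-generalized-weaken-RIP for distortions α, β > 0 with α ≤ β. Fix θ ∈ (0,1), λ > 0, σ > 0, and ρ with √((β² − α²)/(α²(k−1))) < ρ < (1−θ)/(2L). Let x♮ ∈ H and w ∈ ℝ^m satisfy ‖Φᵀw‖_⋄ ≤ θλσ, where Φᵀ is the adjoint of Φ. Then any minimizer x* of the Lasso objective (1/2)‖Φx − (Φx♮ + w)‖₂² + λσ‖x‖_B over x ∈ H satisfies, for every a ∈ A, ‖x* − x♮‖ ≤ C₀ ‖x♮ − a‖_B + C₁ σ, where C₀ = ((1−θ)/(2ρ) − L)^{−1}, C₁ = (1+θ)λ/(α̃²ρ), and α̃² = α² − (β² − α²)/(ρ²(k−1)). -/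
open scoped BigOperators RealInnerProductSpace

/-- `(H, A, ‖·‖_B)` is a compressed sensing space with bound `L`. -/
def IsCSSpace {H : Type*} [NormedAddCommGroup H] [InnerProductSpace ℝ H]
    (B A : Set H) (L : ℝ) : Prop :=
  (0 : H) ∈ A ∧ ∀ a ∈ A, ∀ v : H, ∃ z₁ z₂ : H, v = z₁ + z₂ ∧
    atomNorm B (a + z₁) = atomNorm B a + atomNorm B z₁ ∧ atomNorm B z₂ ≤ L * ‖v‖

/-- The dual norm of the atom norm. -/
noncomputable def dualNorm {H : Type*} [NormedAddCommGroup H] [InnerProductSpace ℝ H]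
    (B : Set H) (y : H) : ℝ :=
  sSup { r : ℝ | ∃ x : H, atomNorm B x ≤ 1 ∧ r = ⟪x, y⟫ }


section auxiliary
variable {H : Type*} [NormedAddCommGroup H] [InnerProductSpace ℝ H] {B : Set H}

variable {H : Type*} [NormedAddCommGroup H] [InnerProductSpace ℝ H] {B : Set H}

def decompSet (B : Set H) (x : H) : Set ℝ :=
  { r : ℝ | ∃ (S : Finset H) (σ : H → ℝ), ↑S ⊆ B ∧ (∀ b ∈ S, 0 ≤ σ b) ∧
    x = ∑ b ∈ S, σ b • b ∧ r = ∑ b ∈ S, σ b }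

lemma atomNorm_eq_sInf (x : H) : atomNorm B x = sInf (decompSet B x) := rfl

lemma decompSet_nonneg {x : H} {r : ℝ} (hr : r ∈ decompSet B x) : 0 ≤ r := by
  obtain ⟨S, σ, -, hσ, -, rfl⟩ := hr
  exact Finset.sum_nonneg hσ

lemma decompSet_bddBelow (x : H) : BddBelow (decompSet B x) :=
  ⟨0, fun r hr => decompSet_nonneg hr⟩

lemma decompSet_nonempty (hBspan : Spans B) (x : H) : (decompSet B x).Nonempty := by
  obtain ⟨S, σ, h1, h2, h3⟩ := hBspan x
  exact ⟨∑ b ∈ S, σ b, S, σ, h1, h2, h3, rfl⟩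

lemma atomNorm_le {x : H} {r : ℝ} (hr : r ∈ decompSet B x) : atomNorm B x ≤ r :=
  csInf_le (decompSet_bddBelow x) hr

lemma atomNorm_nonneg (hBspan : Spans B) (x : H) : 0 ≤ atomNorm B x :=
  le_csInf (decompSet_nonempty hBspan x) fun _ hr => decompSet_nonneg hr

lemma norm_le_atomNorm (hBspan : Spans B) (hBunit : ∀ b ∈ B, ‖b‖ = 1) (x : H) :
    ‖x‖ ≤ atomNorm B x := by
  refine le_csInf (decompSet_nonempty hBspan x) fun r hr => ?_
  obtain ⟨S, σ, h1, h2, rfl, rfl⟩ := hr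
  calc ‖∑ b ∈ S, σ b • b‖ ≤ ∑ b ∈ S, ‖σ b • b‖ := norm_sum_le _ _
    _ = ∑ b ∈ S, σ b := by
        refine Finset.sum_congr rfl fun b hb => ?_
        rw [norm_smul, hBunit b (h1 hb), mul_one, Real.norm_eq_abs,
          abs_of_nonneg (h2 b hb)]

lemma exists_decomp_lt (hBspan : Spans B) (x : H) {ε : ℝ} (hε : 0 < ε) :
    ∃ r ∈ decompSet B x, r < atomNorm B x + ε :=
  Real.lt_sInf_add_pos (decompSet_nonempty hBspan x) hε

lemma add_mem_decompSet {x y : H} {r s : ℝ} (hr : r ∈ decompSet B x)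
    (hs : s ∈ decompSet B y) : r + s ∈ decompSet B (x + y) := by
  classical
  obtain ⟨S₁, σ₁, hS₁, hσ₁, hx, hr⟩ := hr
  obtain ⟨S₂, σ₂, hS₂, hσ₂, hy, hs⟩ := hs
  refine ⟨S₁ ∪ S₂, fun b => (if b ∈ S₁ then σ₁ b else 0) + (if b ∈ S₂ then σ₂ b else 0),
    ?_, ?_, ?_, ?_⟩
  · intro b hb
    rcases Finset.mem_union.1 (by exact_mod_cast hb) with h | h
    · exact hS₁ h
    · exact hS₂ h
  · intro b hb
    have : ∀ (c : Finset H) (σ : H → ℝ), (∀ b ∈ c, 0 ≤ σ b) → 0 ≤ (if b ∈ c then σ b else 0) := by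
      intro c σ hσ; split <;> simp_all
    exact add_nonneg (this _ _ hσ₁) (this _ _ hσ₂)
  · have e1 : ∀ (S : Finset H) (σ : H → ℝ) (g : H → H),
        ∑ b ∈ S₁ ∪ S₂, (if b ∈ S then σ b else 0) • b = ∑ b ∈ (S₁ ∪ S₂) ∩ S, σ b • b := by
      intro S σ g
      rw [← Finset.sum_ite_mem]
      congr 1; ext b; split <;> simp [*]
    rw [hx, hy]
    simp only [add_smul]
    rw [Finset.sum_add_distrib, e1 S₁ σ₁ id, e1 S₂ σ₂ id,
      Finset.union_inter_cancel_left, Finset.union_inter_cancel_right]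
  · have e1 : ∀ (S : Finset H) (σ : H → ℝ),
        ∑ b ∈ S₁ ∪ S₂, (if b ∈ S then σ b else 0) = ∑ b ∈ (S₁ ∪ S₂) ∩ S, σ b := by
      intro S σ
      rw [← Finset.sum_ite_mem]
    rw [hr, hs, Finset.sum_add_distrib, e1 S₁ σ₁, e1 S₂ σ₂,
      Finset.union_inter_cancel_left, Finset.union_inter_cancel_right]

lemma atomNorm_add_le (hBspan : Spans B) (x y : H) :
    atomNorm B (x + y) ≤ atomNorm B x + atomNorm B y := by
  refine le_of_forall_pos_le_add fun ε hε => ?_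
  obtain ⟨r, hr, hr'⟩ := exists_decomp_lt hBspan x (half_pos hε)
  obtain ⟨s, hs, hs'⟩ := exists_decomp_lt hBspan y (half_pos hε)
  have := atomNorm_le (add_mem_decompSet hr hs)
  linarith

lemma neg_mem_decompSet (hBsym : ∀ b ∈ B, -b ∈ B) {x : H} {r : ℝ}
    (hr : r ∈ decompSet B x) : r ∈ decompSet B (-x) := by
  classical
  obtain ⟨S, σ, hS, hσ, hx, hr⟩ := hr
  have hinj : Set.InjOn (fun b : H => -b) S := fun a _ b _ h => by simpa using h
  refine ⟨S.image (fun b => -b), fun c => σ (-c), ?_, ?_, ?_, ?_⟩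
  · intro c hc
    simp only [Finset.coe_image, Set.mem_image] at hc
    obtain ⟨b, hb, rfl⟩ := hc
    exact hBsym b (hS hb)
  · intro c hc
    simp only [Finset.mem_image] at hc
    obtain ⟨b, hb, rfl⟩ := hc
    simpa using hσ b hb
  · rw [Finset.sum_image (fun a ha b hb h => hinj ha hb h)]
    simp [hx, ← Finset.sum_neg_distrib]
  · rw [hr, Finset.sum_image (fun a ha b hb h => hinj ha hb h)]
    simp

lemma atomNorm_neg (hBsym : ∀ b ∈ B, -b ∈ B) (hBspan : Spans B) (x : H) :
    atomNorm B (-x) = atomNorm B x := by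
  have key : ∀ y : H, atomNorm B (-y) ≤ atomNorm B y := by
    intro y
    refine le_of_forall_pos_le_add fun ε hε => ?_
    obtain ⟨r, hr, hr'⟩ := exists_decomp_lt hBspan y hε
    exact le_of_lt (lt_of_le_of_lt (atomNorm_le (neg_mem_decompSet hBsym hr)) hr')
  refine le_antisymm (key x) ?_
  have := key (-x); rwa [neg_neg] at this

lemma atomNorm_smul_le (hBspan : Spans B) {c : ℝ} (hc : 0 ≤ c) (x : H) :
    atomNorm B (c • x) ≤ c * atomNorm B x := by
  have hmem : ∀ r ∈ decompSet B x, c * r ∈ decompSet B (c • x) := by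
    intro r hr
    obtain ⟨S, σ, hS, hσ, hx, hr⟩ := hr
    exact ⟨S, fun b => c * σ b, hS, fun b hb => mul_nonneg hc (hσ b hb), by
      rw [hx, Finset.smul_sum]; simp [smul_smul], by rw [hr, Finset.mul_sum]⟩
  refine le_of_forall_pos_le_add fun ε hε => ?_
  rcases eq_or_lt_of_le hc with rfl | hc'
  · obtain ⟨r, hr, -⟩ := exists_decomp_lt hBspan x hε
    have := atomNorm_le (by simpa using hmem r hr)
    simpa using this.trans (le_of_lt (by simpa using hε))
  · obtain ⟨r, hr, hr'⟩ := exists_decomp_lt hBspan x (div_pos hε hc')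
    have h1 := atomNorm_le (hmem r hr)
    have : c * r ≤ c * (atomNorm B x + ε / c) := by nlinarith
    rw [mul_add, mul_div_cancel₀ _ (ne_of_gt hc')] at this
    linarith

lemma dualNorm_pairing (hBspan : Spans B) (hBunit : ∀ b ∈ B, ‖b‖ = 1) (x y : H) :
    ⟪x, y⟫ ≤ atomNorm B x * dualNorm B y := by
  have hbdd : BddAbove { r : ℝ | ∃ x : H, atomNorm B x ≤ 1 ∧ r = ⟪x, y⟫ } := by
    refine ⟨‖y‖, fun r hr => ?_⟩
    obtain ⟨z, hz, rfl⟩ := hr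
    calc ⟪z, y⟫ ≤ ‖z‖ * ‖y‖ := real_inner_le_norm z y
      _ ≤ 1 * ‖y‖ := by
          have := (norm_le_atomNorm hBspan hBunit z).trans hz
          exact mul_le_mul_of_nonneg_right this (norm_nonneg y)
      _ = ‖y‖ := one_mul _
  rcases eq_or_lt_of_le (atomNorm_nonneg hBspan x) with h0 | h0
  · have hx0 : x = 0 := by
      have := norm_le_atomNorm hBspan hBunit x
      rw [← h0] at this
      simpa using norm_le_zero_iff.1 this
    have hz : atomNorm B (0:H) ≤ 0 := atomNorm_le ⟨∅, fun _ => 0, by simp, by simp, by simp, by simp⟩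
    have hd : 0 ≤ dualNorm B y := by
      refine le_csSup hbdd ⟨0, ?_, by simp⟩
      exact hz.trans zero_le_one
    rw [hx0]
    simp only [inner_zero_left]
    exact mul_nonneg (atomNorm_nonneg hBspan 0) hd
  · have hmem : ⟪(atomNorm B x)⁻¹ • x, y⟫ ∈ { r : ℝ | ∃ x : H, atomNorm B x ≤ 1 ∧ r = ⟪x, y⟫ } := by
      refine ⟨(atomNorm B x)⁻¹ • x, ?_, rfl⟩
      have := atomNorm_smul_le hBspan (le_of_lt (inv_pos.2 h0)) x
      rwa [inv_mul_cancel₀ (ne_of_gt h0)] at this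
    have hle := le_csSup hbdd hmem
    rw [real_inner_smul_left] at hle
    calc ⟪x, y⟫ = atomNorm B x * ((atomNorm B x)⁻¹ * ⟪x, y⟫) := by
          field_simp
      _ ≤ atomNorm B x * dualNorm B y :=
          mul_le_mul_of_nonneg_left hle (le_of_lt h0)

end auxiliary

section expectation
variable {E : Type*} [NormedAddCommGroup E] [InnerProductSpace ℝ E]
variable {τ : Type*} [Fintype τ]

variable {E : Type*} [NormedAddCommGroup E] [InnerProductSpace ℝ E]
variable {τ : Type*} [Fintype τ]

lemma expOne (q : τ → ℝ) (hq : ∑ i, q i = 1) (k : ℕ) :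
    ∑ f : Fin k → τ, ∏ j, q (f j) = 1 := by
  classical
  rw [← Fintype.piFinset_univ, ← Finset.prod_univ_sum]
  simp [hq]

lemma expVec (q : τ → ℝ) (hq : ∑ i, q i = 1) (G : τ → E) (k : ℕ) :
    ∑ f : Fin k → τ, (∏ j, q (f j)) • (∑ j, G (f j)) = (k : ℝ) • ∑ i, q i • G i := by
  classical
  induction k with
  | zero => simp
  | succ k ih =>
    set μ := ∑ i, q i • G i with hμ
    have hsplit : ∑ f : Fin (k+1) → τ, (∏ j, q (f j)) • (∑ j, G (f j))
        = ∑ a : τ, ∑ g : Fin k → τ, (q a * ∏ j, q (g j)) • (G a + ∑ j, G (g j)) := by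
      rw [← (Fin.consEquiv (fun _ : Fin (k+1) => τ)).sum_comp, Fintype.sum_prod_type]
      refine Finset.sum_congr rfl fun a _ => Finset.sum_congr rfl fun g _ => ?_
      simp [Fin.consEquiv, Fin.prod_univ_succ, Fin.sum_univ_succ]
    rw [hsplit]
    have step : ∀ a : τ, ∑ g : Fin k → τ, (q a * ∏ j, q (g j)) • (G a + ∑ j, G (g j))
        = q a • G a + q a • ((k:ℝ) • μ) := by
      intro a
      have expand : ∀ g : Fin k → τ, (q a * ∏ j, q (g j)) • (G a + ∑ j, G (g j))
          = q a • ((∏ j, q (g j)) • G a) + q a • ((∏ j, q (g j)) • (∑ j, G (g j))) := by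
        intro g; rw [mul_smul, smul_add, smul_add]
      rw [Finset.sum_congr rfl fun g _ => expand g, Finset.sum_add_distrib,
        ← Finset.smul_sum, ← Finset.smul_sum, ← Finset.sum_smul, expOne q hq, one_smul, ih]
    rw [Finset.sum_congr rfl fun a _ => step a, Finset.sum_add_distrib]
    have h2 : ∑ a : τ, q a • ((k:ℝ) • μ) = (k:ℝ) • μ := by
      rw [← Finset.sum_smul, hq, one_smul]
    rw [h2]
    push_cast
    rw [add_smul, one_smul]
    abel

lemma expSq (q : τ → ℝ) (hq : ∑ i, q i = 1) (G : τ → E) (k : ℕ) :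
    ∑ f : Fin k → τ, (∏ j, q (f j)) * ‖∑ j, G (f j)‖ ^ 2
    = ((k : ℝ) ^ 2 - k) * ‖∑ i, q i • G i‖ ^ 2 + k * ∑ i, q i * ‖G i‖ ^ 2 := by
  classical
  induction k with
  | zero => simp
  | succ k ih =>
    set μ := ∑ i, q i • G i with hμ
    set m2 := ∑ i, q i * ‖G i‖ ^ 2 with hm2
    have hsplit : ∑ f : Fin (k+1) → τ, (∏ j, q (f j)) * ‖∑ j, G (f j)‖ ^ 2
        = ∑ a : τ, ∑ g : Fin k → τ, (q a * ∏ j, q (g j)) * ‖G a + ∑ j, G (g j)‖ ^ 2 := by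
      rw [← (Fin.consEquiv (fun _ : Fin (k+1) => τ)).sum_comp, Fintype.sum_prod_type]
      refine Finset.sum_congr rfl fun a _ => Finset.sum_congr rfl fun g _ => ?_
      simp [Fin.consEquiv, Fin.prod_univ_succ, Fin.sum_univ_succ]
    rw [hsplit]
    have step : ∀ a : τ, ∑ g : Fin k → τ, (q a * ∏ j, q (g j)) * ‖G a + ∑ j, G (g j)‖ ^ 2
        = q a * (‖G a‖ ^ 2 + 2 * ((k:ℝ) * ⟪G a, μ⟫) + (((k : ℝ) ^ 2 - k) * ‖μ‖ ^ 2 + k * m2)) := by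
      intro a
      have hA : ∑ g : Fin k → τ, (∏ j, q (g j)) * ‖G a‖ ^ 2 = ‖G a‖ ^ 2 := by
        rw [← Finset.sum_mul, expOne q hq, one_mul]
      have hB : ∑ g : Fin k → τ, (2 : ℝ) * ⟪G a, (∏ j, q (g j)) • (∑ j, G (g j))⟫
          = 2 * ((k:ℝ) * ⟪G a, μ⟫) := by
        rw [← Finset.mul_sum, ← inner_sum, expVec q hq, real_inner_smul_right]
      have expand : ∀ g : Fin k → τ, (q a * ∏ j, q (g j)) * ‖G a + ∑ j, G (g j)‖ ^ 2
          = q a * ((∏ j, q (g j)) * ‖G a‖ ^ 2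
            + 2 * ⟪G a, (∏ j, q (g j)) • (∑ j, G (g j))⟫
            + (∏ j, q (g j)) * ‖∑ j, G (g j)‖ ^ 2) := by
        intro g
        rw [norm_add_sq_real, real_inner_smul_right]
        ring
      rw [Finset.sum_congr rfl fun g _ => expand g, ← Finset.mul_sum,
        Finset.sum_add_distrib, Finset.sum_add_distrib, hA, hB, ih]
    rw [Finset.sum_congr rfl fun a _ => step a]
    simp only [mul_add]
    rw [Finset.sum_add_distrib, Finset.sum_add_distrib]
    have h1 : ∑ a : τ, q a * (2 * ((k:ℝ) * ⟪G a, μ⟫)) = 2 * (k:ℝ) * ‖μ‖ ^ 2 := by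
      have e : ∀ a : τ, q a * (2 * ((k:ℝ) * ⟪G a, μ⟫)) = (2 * (k:ℝ)) * ⟪q a • G a, μ⟫ := by
        intro a; rw [real_inner_smul_left]; ring
      rw [Finset.sum_congr rfl fun a _ => e a, ← Finset.mul_sum, ← sum_inner, ← hμ,
        real_inner_self_eq_norm_sq]
    have h2 : ∑ a : τ, (q a * (((k : ℝ) ^ 2 - k) * ‖μ‖ ^ 2) + q a * (k * m2))
        = ((k : ℝ) ^ 2 - k) * ‖μ‖ ^ 2 + k * m2 := by
      rw [Finset.sum_add_distrib, ← Finset.sum_mul, ← Finset.sum_mul, hq, one_mul, one_mul]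
    rw [h1, h2, ← hm2]
    push_cast
    ring

end expectation

section keylemma
variable {H : Type*} [NormedAddCommGroup H] [InnerProductSpace ℝ H] {B : Set H}
variable {E : Type*} [NormedAddCommGroup E] [InnerProductSpace ℝ E]

lemma decomp_bound (hBunit : ∀ b ∈ B, ‖b‖ = 1) {k : ℕ} (hk : 1 < k)
    {α β : ℝ} (hα : 0 ≤ α) (hβ : 0 ≤ β) (Φ : H →ₗ[ℝ] E)
    (hRIPa : ∀ u ∈ simpleSet B k, α * ‖u‖ ≤ ‖Φ u‖)
    (hRIPb : ∀ b ∈ B, ‖Φ b‖ ≤ β)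
    {v : H} {t : ℝ} (ht : t ∈ decompSet B v) :
    α ^ 2 * ‖v‖ ^ 2 ≤ ‖Φ v‖ ^ 2 + (β ^ 2 - α ^ 2) * t ^ 2 / ((k : ℝ) - 1) := by
  classical
  obtain ⟨S, σ, hS, hσ, hv, htt⟩ := ht
  have hK : (2 : ℝ) ≤ (k : ℝ) := by exact_mod_cast hk
  have hK1 : (0 : ℝ) < (k : ℝ) - 1 := by linarith
  have ht0 : 0 ≤ t := htt ▸ Finset.sum_nonneg hσ
  rcases eq_or_lt_of_le ht0 with rfl | htpos
  · -- t = 0 : v = 0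
    have hzero : ∀ b ∈ S, σ b = 0 := by
      intro b hb
      have := (Finset.sum_eq_zero_iff_of_nonneg hσ).mp htt.symm
      exact this b hb
    have hv0 : v = 0 := by
      rw [hv]
      exact Finset.sum_eq_zero fun b hb => by rw [hzero b hb, zero_smul]
    simp [hv0]
  · -- t > 0
    set K := (k : ℝ) with hKdef
    set q : {x // x ∈ S} → ℝ := fun i => σ i / t with hqdef
    have hq : ∑ i, q i = 1 := by
      rw [Finset.sum_coe_sort S (fun b => σ b / t), ← Finset.sum_div, ← htt,
        div_self (ne_of_gt htpos)]
    have hqnn : ∀ i, 0 ≤ q i := fun i => div_nonneg (hσ i i.2) (le_of_lt htpos)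
    -- pointwise RIP on k-term sums of atoms
    have hpt : ∀ f : Fin k → {x // x ∈ S},
        α ^ 2 * ‖∑ j, ((f j : H))‖ ^ 2 ≤ ‖∑ j, Φ ((f j : H))‖ ^ 2 := by
      intro f
      have hmem : (∑ j, ((f j : H))) ∈ simpleSet B k :=
        ⟨fun _ => 1, fun j => (f j : H), fun _ => zero_le_one,
          fun j => hS (f j).2, by simp⟩
      have h1 := hRIPa _ hmem
      have h2 : Φ (∑ j, ((f j : H))) = ∑ j, Φ ((f j : H)) := map_sum Φ _ _
      calc α ^ 2 * ‖∑ j, ((f j : H))‖ ^ 2 = (α * ‖∑ j, ((f j : H))‖) ^ 2 := by ring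
        _ ≤ ‖Φ (∑ j, ((f j : H)))‖ ^ 2 :=
            pow_le_pow_left₀ (mul_nonneg hα (norm_nonneg _)) h1 2
        _ = ‖∑ j, Φ ((f j : H))‖ ^ 2 := by rw [h2]
    -- averaged inequality
    have havg : α ^ 2 * ∑ f : Fin k → {x // x ∈ S}, (∏ j, q (f j)) * ‖∑ j, ((f j : H))‖ ^ 2
        ≤ ∑ f : Fin k → {x // x ∈ S}, (∏ j, q (f j)) * ‖∑ j, Φ ((f j : H))‖ ^ 2 := by
      rw [Finset.mul_sum]
      refine Finset.sum_le_sum fun f _ => ?_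
      have hw : 0 ≤ ∏ j, q (f j) := Finset.prod_nonneg fun j _ => hqnn (f j)
      calc α ^ 2 * ((∏ j, q (f j)) * ‖∑ j, ((f j : H))‖ ^ 2)
          = (∏ j, q (f j)) * (α ^ 2 * ‖∑ j, ((f j : H))‖ ^ 2) := by ring
        _ ≤ (∏ j, q (f j)) * ‖∑ j, Φ ((f j : H))‖ ^ 2 :=
            mul_le_mul_of_nonneg_left (hpt f) hw
    rw [expSq q hq (fun i => (i : H)) k, expSq q hq (fun i => Φ (i : H)) k] at havg
    -- identify the means
    have hmean1 : ∑ i, q i • ((i : {x // x ∈ S}) : H) = (1 / t) • v := by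
      rw [Finset.sum_coe_sort S (fun b => (σ b / t) • b), hv, Finset.smul_sum]
      refine Finset.sum_congr rfl fun b hb => ?_
      rw [smul_smul]
      congr 1
      field_simp
    have hmean2 : ∑ i, q i • Φ ((i : {x // x ∈ S}) : H) = (1 / t) • Φ v := by
      have : ∑ i : {x // x ∈ S}, q i • Φ ((i : {x // x ∈ S}) : H)
          = Φ (∑ i : {x // x ∈ S}, q i • ((i : {x // x ∈ S}) : H)) := by
        rw [map_sum]
        exact Finset.sum_congr rfl fun i _ => (map_smul Φ _ _).symm
      rw [this, hmean1, map_smul]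
    have hm2a : ∑ i, q i * ‖((i : {x // x ∈ S}) : H)‖ ^ 2 = 1 := by
      rw [← hq]
      refine Finset.sum_congr rfl fun i _ => ?_
      rw [hBunit _ (hS i.2), one_pow, mul_one]
    have hm2b : ∑ i, q i * ‖Φ ((i : {x // x ∈ S}) : H)‖ ^ 2 ≤ β ^ 2 := by
      calc ∑ i, q i * ‖Φ ((i : {x // x ∈ S}) : H)‖ ^ 2
          ≤ ∑ i, q i * β ^ 2 := by
            refine Finset.sum_le_sum fun i _ => ?_
            exact mul_le_mul_of_nonneg_left
              (pow_le_pow_left₀ (norm_nonneg _) (hRIPb _ (hS i.2)) 2) (hqnn i)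
        _ = β ^ 2 := by rw [← Finset.sum_mul, hq, one_mul]
    rw [hmean1, hmean2, hm2a] at havg
    have hns1 : ‖(1 / t) • v‖ ^ 2 = (1 / t) ^ 2 * ‖v‖ ^ 2 := by
      rw [norm_smul, Real.norm_eq_abs, abs_of_pos (by positivity), mul_pow]
    have hns2 : ‖(1 / t) • Φ v‖ ^ 2 = (1 / t) ^ 2 * ‖Φ v‖ ^ 2 := by
      rw [norm_smul, Real.norm_eq_abs, abs_of_pos (by positivity), mul_pow]
    rw [hns1, hns2] at havg
    have havg2 : α ^ 2 * ((K ^ 2 - K) * ((1 / t) ^ 2 * ‖v‖ ^ 2) + K * 1)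
        ≤ (K ^ 2 - K) * ((1 / t) ^ 2 * ‖Φ v‖ ^ 2) + K * β ^ 2 := by
      have : (K ^ 2 - K) * ((1 / t) ^ 2 * ‖Φ v‖ ^ 2) + K * (∑ i, q i * ‖Φ ((i : {x // x ∈ S}) : H)‖ ^ 2)
          ≤ (K ^ 2 - K) * ((1 / t) ^ 2 * ‖Φ v‖ ^ 2) + K * β ^ 2 := by
        have hKpos : (0 : ℝ) ≤ K := by linarith
        exact add_le_add_right (mul_le_mul_of_nonneg_left hm2b hKpos) _
      exact le_trans havg this
    -- clear denominators
    have htne : t ≠ 0 := ne_of_gt htpos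
    have hKk : K = (k : ℝ) := rfl
    have hstar : α ^ 2 * ((K ^ 2 - K) * ‖v‖ ^ 2 + K * t ^ 2)
        ≤ (K ^ 2 - K) * ‖Φ v‖ ^ 2 + K * β ^ 2 * t ^ 2 := by
      have ht2 : (0 : ℝ) < t ^ 2 := by positivity
      calc α ^ 2 * ((K ^ 2 - K) * ‖v‖ ^ 2 + K * t ^ 2)
          = α ^ 2 * ((K ^ 2 - K) * ((1 / t) ^ 2 * ‖v‖ ^ 2) + K * 1) * t ^ 2 := by
            field_simp
        _ ≤ ((K ^ 2 - K) * ((1 / t) ^ 2 * ‖Φ v‖ ^ 2) + K * β ^ 2) * t ^ 2 :=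
            mul_le_mul_of_nonneg_right havg2 ht2.le
        _ = (K ^ 2 - K) * ‖Φ v‖ ^ 2 + K * β ^ 2 * t ^ 2 := by
            field_simp
    have hKpos : (0 : ℝ) < K := by linarith
    have hmul : K * ((K - 1) * (α ^ 2 * ‖v‖ ^ 2 - ‖Φ v‖ ^ 2))
        ≤ K * ((β ^ 2 - α ^ 2) * t ^ 2) := by nlinarith [hstar]
    have hdiv : (K - 1) * (α ^ 2 * ‖v‖ ^ 2 - ‖Φ v‖ ^ 2) ≤ (β ^ 2 - α ^ 2) * t ^ 2 :=
      le_of_mul_le_mul_left hmul hKpos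
    have hdiv2 : α ^ 2 * ‖v‖ ^ 2 - ‖Φ v‖ ^ 2 ≤ (β ^ 2 - α ^ 2) * t ^ 2 / (K - 1) := by
      rw [le_div_iff₀ (by linarith : (0:ℝ) < K - 1)]
      linarith [hdiv]
    linarith [hdiv2]

/-- The key RIP-type lower bound in terms of the atom norm. -/
lemma key_bound (hBspan : Spans B) (hBunit : ∀ b ∈ B, ‖b‖ = 1) {k : ℕ} (hk : 1 < k)
    {α β : ℝ} (hα : 0 ≤ α) (hβ : 0 ≤ β) (Φ : H →ₗ[ℝ] E)
    (hRIPa : ∀ u ∈ simpleSet B k, α * ‖u‖ ≤ ‖Φ u‖)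
    (hRIPb : ∀ b ∈ B, ‖Φ b‖ ≤ β) (hαβ : α ≤ β) (v : H) :
    α ^ 2 * ‖v‖ ^ 2 ≤ ‖Φ v‖ ^ 2 + (β ^ 2 - α ^ 2) * (atomNorm B v) ^ 2 / ((k : ℝ) - 1) := by
  have hK1 : (0 : ℝ) < (k : ℝ) - 1 := by
    have : (2 : ℝ) ≤ (k : ℝ) := by exact_mod_cast hk
    linarith
  set N := atomNorm B v with hN
  have hN0 : 0 ≤ N := atomNorm_nonneg hBspan v
  have hba : 0 ≤ β ^ 2 - α ^ 2 := by nlinarith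
  refine le_of_forall_pos_le_add fun ε hε => ?_
  set c := (β ^ 2 - α ^ 2) / ((k : ℝ) - 1) with hc
  have hc0 : 0 ≤ c := div_nonneg hba (le_of_lt hK1)
  set δ := min 1 (ε / (c * (2 * N + 1) + 1)) with hδ
  have hden : 0 < c * (2 * N + 1) + 1 := by positivity
  have hδ0 : 0 < δ := lt_min one_pos (div_pos hε hden)
  obtain ⟨t, ht, htlt⟩ := exists_decomp_lt hBspan v hδ0
  have hb := decomp_bound hBunit hk hα hβ Φ hRIPa hRIPb ht
  have ht0 : 0 ≤ t := decompSet_nonneg ht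
  have ht2 : t ^ 2 ≤ (N + δ) ^ 2 := by nlinarith [htlt, ht0, hδ0]
  have hδ1 : δ ≤ 1 := min_le_left _ _
  have hδ2 : δ ≤ ε / (c * (2 * N + 1) + 1) := min_le_right _ _
  have hrem : c * (N + δ) ^ 2 ≤ c * N ^ 2 + ε := by
    have h1 : c * (N + δ) ^ 2 = c * N ^ 2 + c * (2 * N * δ + δ ^ 2) := by ring
    have h2 : c * (2 * N * δ + δ ^ 2) ≤ c * (δ * (2 * N + 1)) := by
      have : δ ^ 2 ≤ δ := by nlinarith
      nlinarith
    have h3 : c * (δ * (2 * N + 1)) ≤ ε := by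
      have h4 : δ * (c * (2 * N + 1) + 1) ≤ ε := (le_div_iff₀ hden).mp hδ2
      nlinarith [hδ0.le, hc0]
    linarith
  have : (β ^ 2 - α ^ 2) * t ^ 2 / ((k : ℝ) - 1) = c * t ^ 2 := by
    rw [hc]; ring
  rw [this] at hb
  have : c * t ^ 2 ≤ c * (N + δ) ^ 2 := mul_le_mul_of_nonneg_left ht2 hc0
  have hfin : (β ^ 2 - α ^ 2) * N ^ 2 / ((k : ℝ) - 1) = c * N ^ 2 := by rw [hc]; ring
  rw [hfin]
  linarith
end keylemma


lemma arith_M4 (θ D L c nh X : ℝ) (hsub : D < c * nh) (hL0 : 0 < L) (hh0 : 0 < nh)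
    (hce : c * nh = (1 - θ) / 2 * X - L * nh) : θ * X + 2 * D + L * nh ≤ X := by
  linarith [mul_pos hL0 hh0]

set_option maxHeartbeats 1000000 in
/-- Weaken-RIP implies stable and robust recovery via the Lasso. -/
theorem weakenRIP_stable_robust_lasso
    {H : Type*} [NormedAddCommGroup H] [InnerProductSpace ℝ H] [FiniteDimensional ℝ H]
    {m : ℕ} (B : Set H)
    (hBsym : ∀ b ∈ B, -b ∈ B) (hBspan : Spans B) (hBunit : ∀ b ∈ B, ‖b‖ = 1)
    (k : ℕ) (hk : 1 < k) (L : ℝ) (hL : 0 < L)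
    (hCS : IsCSSpace B (simpleSet B k) L)
    (α β : ℝ) (hα : 0 < α) (hβ : 0 < β) (hαβ : α ≤ β)
    (Φ : H →ₗ[ℝ] EuclideanSpace ℝ (Fin m))
    (hRIPa : ∀ u ∈ simpleSet B k, α * ‖u‖ ≤ ‖Φ u‖)
    (hRIPb : ∀ b ∈ B, ‖Φ b‖ ≤ β)
    (θ lam σ ρ : ℝ) (hθ0 : 0 < θ) (hθ1 : θ < 1) (hlam : 0 < lam) (hσ : 0 < σ)
    (hρ1 : Real.sqrt ((β ^ 2 - α ^ 2) / (α ^ 2 * ((k : ℝ) - 1))) < ρ)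
    (hρ2 : ρ < (1 - θ) / (2 * L))
    (xnat : H) (w : EuclideanSpace ℝ (Fin m))
    (hw : dualNorm B ((LinearMap.adjoint Φ) w) ≤ θ * lam * σ)
    (xstar : H)
    (hmin : ∀ x : H,
      (1 / 2) * ‖Φ xstar - (Φ xnat + w)‖ ^ 2 + lam * σ * atomNorm B xstar ≤
      (1 / 2) * ‖Φ x - (Φ xnat + w)‖ ^ 2 + lam * σ * atomNorm B x) :
    ∀ a ∈ simpleSet B k,
      ‖xstar - xnat‖ ≤
        ((1 - θ) / (2 * ρ) - L)⁻¹ * atomNorm B (xnat - a)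
        + ((1 + θ) * lam /
            ((α ^ 2 - (β ^ 2 - α ^ 2) / (ρ ^ 2 * ((k : ℝ) - 1))) * ρ)) * σ := by
  classical
  intro a ha
  set N := atomNorm B with hNdef
  set h := xstar - xnat with hhdef
  set D := atomNorm B (xnat - a) with hDdef
  -- basic positivity facts
  have hρ0 : 0 < ρ := lt_of_le_of_lt (Real.sqrt_nonneg _) hρ1
  have hK2 : (2 : ℝ) ≤ (k : ℝ) := by exact_mod_cast hk
  have hK1 : (0 : ℝ) < (k : ℝ) - 1 := by linarith
  have hba : 0 ≤ β ^ 2 - α ^ 2 := by nlinarith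
  have hρsq : (β ^ 2 - α ^ 2) / (α ^ 2 * ((k : ℝ) - 1)) < ρ ^ 2 :=
    (Real.sqrt_lt' hρ0).mp hρ1
  have hα2k : 0 < α ^ 2 * ((k : ℝ) - 1) := by positivity
  have hρk : 0 < ρ ^ 2 * ((k : ℝ) - 1) := by positivity
  set A2 := α ^ 2 - (β ^ 2 - α ^ 2) / (ρ ^ 2 * ((k : ℝ) - 1)) with hA2def
  have hA2 : 0 < A2 := by
    have h1 : β ^ 2 - α ^ 2 < ρ ^ 2 * (α ^ 2 * ((k : ℝ) - 1)) :=
      (div_lt_iff₀ hα2k).mp hρsq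
    have h2 : (β ^ 2 - α ^ 2) / (ρ ^ 2 * ((k : ℝ) - 1)) < α ^ 2 := by
      rw [div_lt_iff₀ hρk]
      nlinarith
    simpa [hA2def] using sub_pos.mpr h2
  set c := (1 - θ) / (2 * ρ) - L with hcdef
  have hc : 0 < c := by
    have h2 : 2 * L * ρ < 1 - θ := by
      have := (lt_div_iff₀ (by linarith : (0:ℝ) < 2 * L)).mp hρ2
      linarith
    have : L < (1 - θ) / (2 * ρ) := by
      rw [lt_div_iff₀ (by linarith : (0:ℝ) < 2 * ρ)]
      linarith
    simpa [hcdef] using sub_pos.mpr this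
  have hC1 : 0 ≤ (1 + θ) * lam / (A2 * ρ) * σ :=
    mul_nonneg (div_nonneg (by positivity) (mul_pos hA2 hρ0).le) hσ.le
  have hlamσ : 0 < lam * σ := mul_pos hlam hσ
  -- decomposition from the CS space property
  obtain ⟨z₁, z₂, hz, hzsum, hz2⟩ := hCS.2 a ha h
  have hNz₁ : 0 ≤ N z₁ := atomNorm_nonneg hBspan z₁
  have hNz₂ : 0 ≤ N z₂ := atomNorm_nonneg hBspan z₂
  have hNh0 : 0 ≤ N h := atomNorm_nonneg hBspan h
  have hD0 : 0 ≤ D := atomNorm_nonneg hBspan _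
  -- the basic (first-order optimality) inequality
  have BIt : ∀ t : ℝ, 0 < t → t ≤ 1 →
      ‖Φ h‖ ^ 2 ≤ ⟪Φ h, w⟫ + lam * σ * (N xnat - N xstar) + (t / 2) * ‖Φ h‖ ^ 2 := by
    intro t ht0 ht1
    have hmin' := hmin (xstar + t • (xnat - xstar))
    set r := Φ xstar - (Φ xnat + w) with hrdef
    have heq : Φ (xstar + t • (xnat - xstar)) - (Φ xnat + w) = r - t • Φ h := by
      simp only [hrdef, hhdef, map_add, map_smul, map_sub]
      module
    rw [heq] at hmin'
    have hnorm : ‖r - t • Φ h‖ ^ 2 = ‖r‖ ^ 2 - 2 * (t * ⟪r, Φ h⟫) + t ^ 2 * ‖Φ h‖ ^ 2 := by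
      rw [norm_sub_sq_real, real_inner_smul_right, norm_smul, Real.norm_eq_abs,
        abs_of_pos ht0, mul_pow]
    rw [hnorm] at hmin'
    have hconv : atomNorm B (xstar + t • (xnat - xstar))
        ≤ (1 - t) * N xstar + t * N xnat := by
      have hveq : xstar + t • (xnat - xstar) = (1 - t) • xstar + t • xnat := by module
      rw [hveq]
      calc atomNorm B ((1 - t) • xstar + t • xnat)
          ≤ atomNorm B ((1 - t) • xstar) + atomNorm B (t • xnat) :=
            atomNorm_add_le hBspan _ _
        _ ≤ (1 - t) * N xstar + t * N xnat :=
            add_le_add (atomNorm_smul_le hBspan (by linarith) _)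
              (atomNorm_smul_le hBspan (le_of_lt ht0) _)
    have hinner : ⟪r, Φ h⟫ = ‖Φ h‖ ^ 2 - ⟪Φ h, w⟫ := by
      have : r = Φ h - w := by
        simp only [hrdef, hhdef, map_sub]
        abel
      rw [this, inner_sub_left, real_inner_self_eq_norm_sq, real_inner_comm w (Φ h)]
    have step : lam * σ * N xstar ≤ - (t * ⟪r, Φ h⟫) + (t ^ 2 / 2) * ‖Φ h‖ ^ 2
        + lam * σ * ((1 - t) * N xstar + t * N xnat) := by
      have := mul_le_mul_of_nonneg_left hconv (le_of_lt hlamσ)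
      linarith [hmin', this]
    have step2 : t * ⟪r, Φ h⟫ ≤ (t ^ 2 / 2) * ‖Φ h‖ ^ 2 + t * (lam * σ * (N xnat - N xstar)) := by
      linarith [step]
    have step3 : ⟪r, Φ h⟫ ≤ (t / 2) * ‖Φ h‖ ^ 2 + lam * σ * (N xnat - N xstar) := by
      have hmul : t * ⟪r, Φ h⟫ ≤ t * ((t / 2) * ‖Φ h‖ ^ 2 + lam * σ * (N xnat - N xstar)) := by
        calc t * ⟪r, Φ h⟫ ≤ (t ^ 2 / 2) * ‖Φ h‖ ^ 2 + t * (lam * σ * (N xnat - N xstar)) := step2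
          _ = t * ((t / 2) * ‖Φ h‖ ^ 2 + lam * σ * (N xnat - N xstar)) := by ring
      exact le_of_mul_le_mul_left hmul ht0
    rw [hinner] at step3
    linarith
  have BI : ‖Φ h‖ ^ 2 ≤ ⟪Φ h, w⟫ + lam * σ * (N xnat - N xstar) := by
    refine le_of_forall_pos_le_add fun ε hε => ?_
    have hden : (0 : ℝ) < ‖Φ h‖ ^ 2 + 1 := by positivity
    set t := min 1 (2 * ε / (‖Φ h‖ ^ 2 + 1)) with htdef
    have ht0 : 0 < t := lt_min one_pos (by positivity)
    have ht1 : t ≤ 1 := min_le_left _ _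
    have := BIt t ht0 ht1
    have htail : (t / 2) * ‖Φ h‖ ^ 2 ≤ ε := by
      have h1 : t ≤ 2 * ε / (‖Φ h‖ ^ 2 + 1) := min_le_right _ _
      have h2 : t * (‖Φ h‖ ^ 2 + 1) ≤ 2 * ε := by
        have := mul_le_mul_of_nonneg_right h1 (le_of_lt hden)
        rwa [div_mul_cancel₀ _ (ne_of_gt hden)] at this
      linarith [h2, ht0]
    linarith
  -- dual-norm bound on the noise term
  have hdual : ⟪Φ h, w⟫ ≤ N h * (θ * lam * σ) := by
    have hadj : ⟪Φ h, w⟫ = ⟪h, (LinearMap.adjoint Φ) w⟫ :=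
      (LinearMap.adjoint_inner_right Φ h w).symm
    rw [hadj]
    calc ⟪h, (LinearMap.adjoint Φ) w⟫
        ≤ N h * dualNorm B ((LinearMap.adjoint Φ) w) :=
          dualNorm_pairing hBspan hBunit h _
      _ ≤ N h * (θ * lam * σ) := mul_le_mul_of_nonneg_left hw hNh0
  -- cone-type bound
  have hΔ : N xnat - N xstar ≤ 2 * D + N z₂ - N z₁ := by
    have hxn : N xnat ≤ N a + D := by
      have : xnat = a + (xnat - a) := by abel
      calc N xnat = atomNorm B (a + (xnat - a)) := by rw [← this]
        _ ≤ N a + D := atomNorm_add_le hBspan _ _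
    have haz : a + z₁ = xstar + (-(xnat - a)) + (-z₂) := by
      have : xstar = xnat + (z₁ + z₂) := by
        rw [← hz, hhdef]; abel
      rw [this]; abel
    have hxs : N a + N z₁ ≤ N xstar + D + N z₂ := by
      calc N a + N z₁ = atomNorm B (a + z₁) := hzsum.symm
        _ = atomNorm B (xstar + (-(xnat - a)) + (-z₂)) := by rw [haz]
        _ ≤ atomNorm B (xstar + (-(xnat - a))) + atomNorm B (-z₂) :=
            atomNorm_add_le hBspan _ _
        _ ≤ (N xstar + atomNorm B (-(xnat - a))) + atomNorm B (-z₂) :=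
            add_le_add_left (atomNorm_add_le hBspan _ _) _
        _ = N xstar + D + N z₂ := by
            rw [atomNorm_neg hBsym hBspan, atomNorm_neg hBsym hBspan]
    linarith
  have hNh : N h ≤ N z₁ + N z₂ := by
    calc N h = atomNorm B (z₁ + z₂) := by rw [← hz]
      _ ≤ N z₁ + N z₂ := atomNorm_add_le hBspan _ _
  -- master inequality
  have M1 : ‖Φ h‖ ^ 2 ≤ lam * σ * (θ * N h + 2 * D + N z₂ - N z₁) := by
    have := add_le_add hdual (mul_le_mul_of_nonneg_left hΔ (le_of_lt hlamσ))
    calc ‖Φ h‖ ^ 2 ≤ ⟪Φ h, w⟫ + lam * σ * (N xnat - N xstar) := BI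
      _ ≤ N h * (θ * lam * σ) + lam * σ * (2 * D + N z₂ - N z₁) := this
      _ = lam * σ * (θ * N h + 2 * D + N z₂ - N z₁) := by ring
  have M2 : 0 ≤ θ * N h + 2 * D + N z₂ - N z₁ := by
    have h1 : (0:ℝ) ≤ ‖Φ h‖ ^ 2 := sq_nonneg _
    nlinarith [M1, hlamσ]
  -- final case analysis
  rcases le_or_gt ‖h‖ (ρ * N h) with hcase | hcase
  · -- Case 1
    have h1 : (1 - θ) * N z₁ ≤ 2 * D + (1 + θ) * N z₂ := by nlinarith [M2, hNh]
    have h2 : (1 - θ) * ‖h‖ ≤ 2 * ρ * (D + L * ‖h‖) := by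
      have e1 : (1 - θ) * ‖h‖ ≤ (1 - θ) * (ρ * N h) :=
        mul_le_mul_of_nonneg_left hcase (by linarith)
      have e2 : ρ * N h ≤ ρ * (N z₁ + N z₂) := mul_le_mul_of_nonneg_left hNh hρ0.le
      have e3 : (1 - θ) * (ρ * N h) ≤ (1 - θ) * (ρ * (N z₁ + N z₂)) :=
        mul_le_mul_of_nonneg_left e2 (by linarith)
      have h3 : (1 - θ) * ‖h‖ ≤ ρ * ((1 - θ) * N z₁ + (1 - θ) * N z₂) := by
        have e4 : ρ * ((1 - θ) * N z₁ + (1 - θ) * N z₂) = (1 - θ) * (ρ * (N z₁ + N z₂)) := by ring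
        linarith [e1, e3]
      have e5 : ρ * ((1 - θ) * N z₁) ≤ ρ * (2 * D + (1 + θ) * N z₂) :=
        mul_le_mul_of_nonneg_left h1 hρ0.le
      have e6 : ρ * N z₂ ≤ ρ * (L * ‖h‖) := mul_le_mul_of_nonneg_left hz2 hρ0.le
      linarith [h3, e5, e6]
    have h4 : c * ‖h‖ ≤ D := by
      rw [hcdef, sub_mul, div_mul_eq_mul_div, sub_le_iff_le_add, div_le_iff₀ (by linarith : (0:ℝ) < 2 * ρ)]
      nlinarith [h2]
    have h5 : ‖h‖ ≤ c⁻¹ * D := by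
      rw [inv_mul_eq_div, le_div_iff₀ hc]
      linarith [h4]
    calc ‖h‖ ≤ c⁻¹ * D := h5
      _ ≤ c⁻¹ * D + (1 + θ) * lam / (A2 * ρ) * σ := by linarith [hC1]
  · -- Case 2 : ρ * N h < ‖h‖
    rcases le_or_gt (c * ‖h‖) D with hsub | hsub
    · have h5 : ‖h‖ ≤ c⁻¹ * D := by
        rw [inv_mul_eq_div, le_div_iff₀ hc]
        linarith [hsub]
      calc ‖h‖ ≤ c⁻¹ * D := h5
        _ ≤ c⁻¹ * D + (1 + θ) * lam / (A2 * ρ) * σ := by linarith [hC1]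
    · -- subcase 2b
      have hh0 : 0 < ‖h‖ := by
        have : 0 ≤ ρ * N h := mul_nonneg hρ0.le hNh0
        linarith [hcase]
      have hkey := key_bound hBspan hBunit hk (le_of_lt hα) (le_of_lt hβ) Φ hRIPa hRIPb hαβ h
      have hNhρ : N h < ‖h‖ / ρ := by
        rw [lt_div_iff₀ hρ0]
        linarith [hcase]
      have hsq : ρ ^ 2 * (N h) ^ 2 ≤ ‖h‖ ^ 2 := by
        have hms := mul_self_le_mul_self (mul_nonneg hρ0.le hNh0) hcase.le
        nlinarith [hms]
      have hR : (0:ℝ) < ρ ^ 2 * ((k : ℝ) - 1) := hρk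
      have h7 : ρ ^ 2 * ((β ^ 2 - α ^ 2) * (N h) ^ 2) ≤ (β ^ 2 - α ^ 2) * ‖h‖ ^ 2 := by
        have h7a : (0:ℝ) ≤ (β ^ 2 - α ^ 2) * (‖h‖ ^ 2 - ρ ^ 2 * (N h) ^ 2) :=
          mul_nonneg hba (sub_nonneg.mpr hsq)
        linarith [h7a]
      have e1 : (β ^ 2 - α ^ 2) * (N h) ^ 2 / ((k : ℝ) - 1)
          = ρ ^ 2 * ((β ^ 2 - α ^ 2) * (N h) ^ 2) / (ρ ^ 2 * ((k : ℝ) - 1)) := by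
        rw [mul_div_mul_left _ _ (by positivity : (ρ:ℝ) ^ 2 ≠ 0)]
      rw [e1] at hkey
      have h8 : ρ ^ 2 * ((β ^ 2 - α ^ 2) * (N h) ^ 2) / (ρ ^ 2 * ((k : ℝ) - 1))
          ≤ (β ^ 2 - α ^ 2) * ‖h‖ ^ 2 / (ρ ^ 2 * ((k : ℝ) - 1)) := by
        gcongr
      have e2 : (β ^ 2 - α ^ 2) * ‖h‖ ^ 2 / (ρ ^ 2 * ((k : ℝ) - 1))
          = (β ^ 2 - α ^ 2) / (ρ ^ 2 * ((k : ℝ) - 1)) * ‖h‖ ^ 2 := by ring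
      have hlow : A2 * ‖h‖ ^ 2 ≤ ‖Φ h‖ ^ 2 := by
        have e3 : A2 * ‖h‖ ^ 2
            = α ^ 2 * ‖h‖ ^ 2 - (β ^ 2 - α ^ 2) / (ρ ^ 2 * ((k : ℝ) - 1)) * ‖h‖ ^ 2 := by
          rw [hA2def]; ring
        rw [e3]
        linarith [hkey, h8, e2.symm.le, e2.le]
      -- chain of bounds
      have M3 : ‖Φ h‖ ^ 2 ≤ lam * σ * (θ * (‖h‖ / ρ) + 2 * D + L * ‖h‖) := by
        have hin : θ * N h + 2 * D + N z₂ - N z₁ ≤ θ * (‖h‖ / ρ) + 2 * D + L * ‖h‖ := by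
          have t1 : θ * N h ≤ θ * (‖h‖ / ρ) := mul_le_mul_of_nonneg_left hNhρ.le hθ0.le
          linarith [t1, hz2, hNz₁]
        calc ‖Φ h‖ ^ 2 ≤ lam * σ * (θ * N h + 2 * D + N z₂ - N z₁) := M1
          _ ≤ lam * σ * (θ * (‖h‖ / ρ) + 2 * D + L * ‖h‖) :=
              mul_le_mul_of_nonneg_left hin (le_of_lt hlamσ)
      have M4 : θ * (‖h‖ / ρ) + 2 * D + L * ‖h‖ ≤ ‖h‖ / ρ := by
        have hce : c * ‖h‖ = (1 - θ) / 2 * (‖h‖ / ρ) - L * ‖h‖ := by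
          rw [hcdef]; field_simp
        exact arith_M4 θ D L c ‖h‖ (‖h‖ / ρ) hsub hL hh0 hce
      have M5 : A2 * ‖h‖ ^ 2 ≤ lam * σ * ‖h‖ / ρ := by
        have := le_trans hlow (le_trans M3 (mul_le_mul_of_nonneg_left M4 (le_of_lt hlamσ)))
        calc A2 * ‖h‖ ^ 2 ≤ lam * σ * (‖h‖ / ρ) := this
          _ = lam * σ * ‖h‖ / ρ := by ring
      have M6 : A2 * ρ * ‖h‖ * ‖h‖ ≤ lam * σ * ‖h‖ := by
        have h9 := (le_div_iff₀ hρ0).mp M5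
        linarith [h9]
      have M7 : A2 * ρ * ‖h‖ ≤ lam * σ :=
        le_of_mul_le_mul_right M6 hh0
      have M8 : ‖h‖ ≤ (1 + θ) * lam / (A2 * ρ) * σ := by
        rw [div_mul_eq_mul_div, le_div_iff₀ (mul_pos hA2 hρ0)]
        have t2 : 0 ≤ θ * (lam * σ) := mul_nonneg hθ0.le (mul_pos hlam hσ).le
        linarith [M7, t2]
      have hcD : 0 ≤ c⁻¹ * D := mul_nonneg (inv_nonneg.mpr (le_of_lt hc)) hD0
      linarith [M8, hcD]
end
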